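/- arXiv:2210.01631 — 6 statements merged into one kernel-verified Lean document; each statement's English description precedes it below -/
import Mathlib

section
/- Every first-countable compact Hausdorff admissible right topological (CHART) group is metrizable. -/
open Filter Set Topology TopologicalSpace

/-- Every first-countable CHART group (compact Hausdorff admissible right
topological group) is metrizable. -/
theorem metrizable_of_chart_firstCountable {G : Type*} [Group G] [TopologicalSpace G]
    [CompactSpace G] [T2Space G] [FirstCountableTopology G]
    (hright : ∀ h : G, Continuous fun g : G => g * h)
    (hadm : Dense {g : G | Continuous fun h : G => g * h}) :
    TopologicalSpace.MetrizableSpace G := by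
  classical
  set Lam : Set G := {g : G | Continuous fun h : G => g * h} with hLamdef
  -- countable antitone basis at 1
  obtain ⟨s, hs⟩ := (𝓝 (1 : G)).exists_antitone_basis
  set U : ℕ → Set G := fun n => interior (s n) with hUdef
  have hUopen : ∀ n, IsOpen (U n) := fun n => isOpen_interior
  have hUmem : ∀ n, (1 : G) ∈ U n := fun n =>
    mem_interior_iff_mem_nhds.mpr (hs.mem n)
  -- Urysohn functions
  have hf : ∀ n : ℕ, ∃ f : C(G, ℝ), Set.EqOn f 0 {1} ∧ Set.EqOn f 1 (U n)ᶜ ∧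
      ∀ x, f x ∈ Set.Icc (0 : ℝ) 1 := by
    intro n
    refine exists_continuous_zero_one_of_isClosed isClosed_singleton
      (hUopen n).isClosed_compl ?_
    rw [Set.disjoint_singleton_left]
    simp [hUmem n]
  choose f hf0 hf1 _hf01 using hf
  -- finite covers via dense topological center
  have hcov : ∀ n : ℕ, ∃ t : Finset ↥Lam, ∀ x : G, ∃ l ∈ t, (l : G) * x ∈ U n := by
    intro n
    have hsub : (Set.univ : Set G) ⊆ ⋃ l : ↥Lam, (fun g : G => (l : G) * g) ⁻¹' U n := by
      intro h _
      have hopen : IsOpen ((fun g : G => g * h) ⁻¹' U n) := (hUopen n).preimage (hright h)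
      have hne : ((fun g : G => g * h) ⁻¹' U n).Nonempty :=
        ⟨h⁻¹, by simpa using hUmem n⟩
      obtain ⟨l, hlmem, hl⟩ := hadm.exists_mem_open hopen hne
      exact Set.mem_iUnion.mpr ⟨⟨l, hlmem⟩, by simpa using hl⟩
    obtain ⟨t, ht⟩ := isCompact_univ.elim_finite_subcover
      (fun l : ↥Lam => (fun g : G => (l : G) * g) ⁻¹' U n)
      (fun l => (hUopen n).preimage l.2) hsub
    refine ⟨t, fun x => ?_⟩
    have := ht (Set.mem_univ x)
    simpa using this
  choose t ht using hcov
  -- the countable separating family of continuous functions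
  let J : Type _ := ℕ × Σ n : ℕ, {l : ↥Lam // l ∈ t n}
  let Φ : G → J → ℝ := fun x j => f j.1 ((j.2.2.1 : G) * x)
  have hΦc : Continuous Φ := by
    refine continuous_pi fun j => (f j.1).continuous.comp ?_
    exact j.2.2.1.2
  have hΦi : Function.Injective Φ := by
    intro x y hxy
    choose lam hlamt hlamU using fun n => ht n x
    -- lam n * x → 1
    have hx1 : Tendsto (fun n => (lam n : G) * x) atTop (𝓝 (1 : G)) := by
      refine hs.toHasBasis.tendsto_right_iff.mpr ?_
      intro N _
      filter_upwards [eventually_ge_atTop N] with n hn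
      exact hs.antitone hn (interior_subset (hlamU n))
    -- lam n * y → x⁻¹ * y
    have hy1 : Tendsto (fun n => (lam n : G) * y) atTop (𝓝 (x⁻¹ * y)) := by
      have h2 : Tendsto (fun n => ((lam n : G) * x) * (x⁻¹ * y)) atTop
          (𝓝 ((1 : G) * (x⁻¹ * y))) :=
        ((hright (x⁻¹ * y)).tendsto _).comp hx1
      have heq : (fun n => ((lam n : G) * x) * (x⁻¹ * y)) = fun n => (lam n : G) * y := by
        funext n; group
      rw [heq] at h2
      simpa using h2
    have key : ∀ k : ℕ, f k (x⁻¹ * y) = 0 := by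
      intro k
      have h1 : Tendsto (fun n => f k ((lam n : G) * x)) atTop (𝓝 (f k 1)) :=
        ((f k).continuous.tendsto _).comp hx1
      have h2 : Tendsto (fun n => f k ((lam n : G) * y)) atTop (𝓝 (f k (x⁻¹ * y))) :=
        ((f k).continuous.tendsto _).comp hy1
      have heq : (fun n => f k ((lam n : G) * x)) = fun n => f k ((lam n : G) * y) := by
        funext n
        exact congrFun hxy (k, ⟨n, ⟨lam n, hlamt n⟩⟩)
      rw [heq] at h1
      have := tendsto_nhds_unique h1 h2
      have h10 : f k (1 : G) = 0 := hf0 k rfl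
      rw [h10] at this
      exact this.symm
    have hmem : ∀ k : ℕ, x⁻¹ * y ∈ U k := by
      intro k
      by_contra hnot
      have : f k (x⁻¹ * y) = 1 := hf1 k hnot
      rw [key k] at this
      norm_num at this
    have hxy1 : x⁻¹ * y = 1 := by
      by_contra hne
      have hopen : ({x⁻¹ * y}ᶜ : Set G) ∈ 𝓝 (1 : G) := by
        refine (isOpen_compl_singleton).mem_nhds ?_
        simp [Ne.symm hne]
      obtain ⟨k, -, hk⟩ := hs.toHasBasis.mem_iff.mp hopen
      exact (hk (interior_subset (hmem k))) rfl
    have : x * (x⁻¹ * y) = x * 1 := by rw [hxy1]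
    have h' : y = x := by simpa [mul_assoc] using this
    exact h'.symm
  have hJ : Countable J := by
    infer_instance
  exact ((hΦc.isClosedEmbedding hΦi).toIsEmbedding).metrizableSpace
end

section
/- (Namioka) Every metrizable compact Hausdorff admissible right topological (CHART) group is a topological group (i.e. multiplication is jointly continuous and inversion is continuous). -/
open Filter Topology Set

/-- A pointwise limit of continuous functions from a Baire space to a metric space
has a point of continuity. -/
lemma exists_continuousAt_of_tendsto_pointwise {X Y : Type*} [TopologicalSpace X]
    [Nonempty X] [BaireSpace X] [MetricSpace Y] {f : ℕ → X → Y} {g : X → Y}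
    (hf : ∀ n, Continuous (f n))
    (hlim : ∀ x, Tendsto (fun n => f n x) atTop (𝓝 (g x))) :
    ∃ x, ContinuousAt g x := by
  -- for ε > 0 and N, the set of points where the tail of the sequence is ε-clustered
  set F : ℝ → ℕ → Set X := fun ε N =>
    {x | ∀ m ≥ N, ∀ n ≥ N, dist (f m x) (f n x) ≤ ε} with hF
  have hFclosed : ∀ ε N, IsClosed (F ε N) := by
    intro ε N
    have : F ε N = ⋂ (m : ℕ) (_ : m ≥ N) (n : ℕ) (_ : n ≥ N),
        {x | dist (f m x) (f n x) ≤ ε} := by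
      ext x; simp [hF]
    rw [this]
    refine isClosed_iInter fun m => isClosed_iInter fun _ =>
      isClosed_iInter fun n => isClosed_iInter fun _ => ?_
    exact isClosed_le (Continuous.dist (hf m) (hf n)) continuous_const
  have hFcover : ∀ ε > (0:ℝ), ∀ x, ∃ N, x ∈ F ε N := by
    intro ε hε x
    have : ∀ᶠ n in atTop, dist (f n x) (g x) < ε / 2 := by
      have := Metric.tendsto_nhds.mp (hlim x) (ε / 2) (by linarith)
      exact this
    obtain ⟨N, hN⟩ := this.exists_forall_of_atTop
    refine ⟨N, fun m hm n hn => ?_⟩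
    calc dist (f m x) (f n x) ≤ dist (f m x) (g x) + dist (f n x) (g x) :=
          dist_triangle_right _ _ _
      _ ≤ ε / 2 + ε / 2 := add_le_add (hN m hm).le (hN n hn).le
      _ = ε := by ring
  have hOdense : ∀ ε > (0:ℝ), Dense (⋃ N, interior (F ε N)) := by
    intro ε hε
    refine dense_iUnion_interior_of_closed (hFclosed ε) ?_
    exact eq_univ_of_forall fun x => mem_iUnion.mpr (hFcover ε hε x)
  have hD : Dense (⋂ k : ℕ, ⋃ N, interior (F (1 / (k + 1)) N)) := by
    refine dense_iInter_of_isOpen (fun k => isOpen_iUnion fun N => isOpen_interior) ?_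
    intro k
    exact hOdense _ (by positivity)
  obtain ⟨x, hx⟩ := hD.nonempty
  refine ⟨x, ?_⟩
  rw [ContinuousAt, Metric.tendsto_nhds]
  intro ε hε
  obtain ⟨k, hk⟩ := exists_nat_one_div_lt (show (0:ℝ) < ε / 3 by linarith)
  set δ : ℝ := 1 / (k + 1) with hδ
  have hδpos : (0:ℝ) < δ := by positivity
  have hδε : 3 * δ < ε := by
    have : δ < ε / 3 := hk
    linarith
  obtain ⟨N, hN⟩ := mem_iUnion.mp (mem_iInter.mp hx k)
  -- a point y in F δ N satisfies dist (g y) (f N y) ≤ δ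
  have key : ∀ y ∈ F δ N, dist (g y) (f N y) ≤ δ := by
    intro y hy
    have h1 : Tendsto (fun m => dist (f m y) (f N y)) atTop (𝓝 (dist (g y) (f N y))) :=
      (Tendsto.dist (hlim y) tendsto_const_nhds)
    refine le_of_tendsto h1 ?_
    filter_upwards [eventually_ge_atTop N] with m hm
    exact hy m hm N le_rfl
  have hxF : x ∈ F δ N := interior_subset hN
  have hcont : ∀ᶠ y in 𝓝 x, dist (f N y) (f N x) < δ :=
    Metric.tendsto_nhds.mp ((hf N).continuousAt) δ hδpos
  filter_upwards [hcont, (isOpen_interior.mem_nhds hN)] with y hy1 hy2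
  have hyF : y ∈ F δ N := interior_subset hy2
  calc dist (g y) (g x) ≤ dist (g y) (f N y) + dist (f N y) (f N x) + dist (f N x) (g x) :=
        dist_triangle4 _ _ _ _
    _ < δ + δ + δ := by
        have h3 : dist (f N x) (g x) ≤ δ := by rw [dist_comm]; exact key x hxF
        have h1 := key y hyF
        have := lt_of_le_of_lt (add_le_add_right (add_le_add h1 hy1.le) _)
          (add_lt_add_left (lt_of_le_of_lt h3 (lt_add_of_pos_left δ hδpos)) _)
        -- easier: direct
        nlinarith [key y hyF, hy1, h3]
    _ = 3 * δ := by ring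
    _ < ε := hδε

/-- A separately continuous function from (Baire) × (compact metric) to a metric space
is jointly continuous at `(a, y)` for all `y`, for some `a`. -/
lemma exists_forall_continuousAt_of_separately_continuous {X Y Z : Type*}
    [TopologicalSpace X] [Nonempty X] [BaireSpace X] [MetricSpace Y] [CompactSpace Y]
    [MetricSpace Z] {f : X → Y → Z}
    (hx : ∀ y, Continuous fun x => f x y) (hy : ∀ x, Continuous (f x)) :
    ∃ a : X, ∀ y : Y, ContinuousAt (fun p : X × Y => f p.1 p.2) (a, y) := by
  -- F ε k : points x where f x is (1/(k+1), ε)-uniformly continuous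
  set F : ℝ → ℕ → Set X := fun ε k =>
    {x | ∀ y y' : Y, dist y y' ≤ 1 / (k + 1) → dist (f x y) (f x y') ≤ ε} with hF
  have hFclosed : ∀ ε k, IsClosed (F ε k) := by
    intro ε k
    have : F ε k = ⋂ (y : Y) (y' : Y) (_ : dist y y' ≤ 1 / (k + 1)),
        {x | dist (f x y) (f x y') ≤ ε} := by
      ext x; simp [hF]
    rw [this]
    refine isClosed_iInter fun y => isClosed_iInter fun y' => isClosed_iInter fun _ => ?_
    exact isClosed_le (Continuous.dist (hx y) (hx y')) continuous_const
  have hFcover : ∀ ε > (0:ℝ), ∀ x, ∃ k, x ∈ F ε k := by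
    intro ε hε x
    have huc : UniformContinuous (f x) := CompactSpace.uniformContinuous_of_continuous (hy x)
    obtain ⟨δ, hδpos, hδ⟩ := Metric.uniformContinuous_iff.mp huc ε hε
    obtain ⟨k, hk⟩ := exists_nat_one_div_lt hδpos
    refine ⟨k, fun y y' hyy' => ?_⟩
    exact (hδ (lt_of_le_of_lt hyy' hk)).le
  have hOdense : ∀ ε > (0:ℝ), Dense (⋃ k, interior (F ε k)) := by
    intro ε hε
    refine dense_iUnion_interior_of_closed (hFclosed ε) ?_
    exact eq_univ_of_forall fun x => mem_iUnion.mpr (hFcover ε hε x)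
  have hD : Dense (⋂ n : ℕ, ⋃ k, interior (F (1 / (n + 1)) k)) := by
    refine dense_iInter_of_isOpen (fun n => isOpen_iUnion fun k => isOpen_interior) ?_
    intro n
    exact hOdense _ (by positivity)
  obtain ⟨a, ha⟩ := hD.nonempty
  refine ⟨a, fun y => ?_⟩
  rw [ContinuousAt, Metric.tendsto_nhds]
  intro ε hε
  obtain ⟨n, hn⟩ := exists_nat_one_div_lt (show (0:ℝ) < ε / 2 by linarith)
  set δ : ℝ := 1 / (n + 1) with hδdef
  have hδpos : (0:ℝ) < δ := by positivity
  have hδε : 2 * δ < ε := by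
    have : δ < ε / 2 := hn
    linarith
  obtain ⟨k, hk⟩ := mem_iUnion.mp (mem_iInter.mp ha n)
  have hcont : {x | dist (f x y) (f a y) < δ} ∈ 𝓝 a := by
    have h := Metric.tendsto_nhds.mp ((hx y).continuousAt (x := a)) δ hδpos
    exact h
  have hU : interior (F δ k) ∩ {x | dist (f x y) (f a y) < δ} ∈ 𝓝 a :=
    Filter.inter_mem (isOpen_interior.mem_nhds hk) hcont
  have hV : Metric.ball y (1 / (k + 1)) ∈ 𝓝 y :=
    Metric.ball_mem_nhds y (by positivity)
  rw [nhds_prod_eq]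
  filter_upwards [Filter.prod_mem_prod hU hV] with p hp
  obtain ⟨⟨hp1, hp2⟩, hp3⟩ := hp
  have hpF : p.1 ∈ F δ k := interior_subset hp1
  calc dist (f p.1 p.2) (f a y) ≤ dist (f p.1 p.2) (f p.1 y) + dist (f p.1 y) (f a y) :=
        dist_triangle _ _ _
    _ < δ + δ := add_lt_add_of_le_of_lt (hpF p.2 y (le_of_lt hp3)) hp2
    _ = 2 * δ := by ring
    _ < ε := hδε

/-- (Namioka) Every metrizable CHART group (compact Hausdorff admissible right
topological group) is a topological group. -/
theorem topologicalGroup_of_chart_metrizable {G : Type*} [Group G] [TopologicalSpace G]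
    [CompactSpace G] [T2Space G] [TopologicalSpace.MetrizableSpace G]
    (hright : ∀ h : G, Continuous fun g : G => g * h)
    (hadm : Dense {g : G | Continuous fun h : G => g * h}) :
    IsTopologicalGroup G := by
  letI : MetricSpace G := TopologicalSpace.metrizableSpaceMetric G
  -- Step A : every left translation is continuous
  have hleft : ∀ g : G, Continuous fun h : G => g * h := by
    intro g
    obtain ⟨u, hu_mem, hu_lim⟩ := mem_closure_iff_seq_limit.mp (hadm g)
    have hpt : ∀ h : G, Tendsto (fun n => u n * h) atTop (𝓝 (g * h)) := fun h =>
      ((hright h).tendsto g).comp hu_lim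
    obtain ⟨h₀, hc₀⟩ := exists_continuousAt_of_tendsto_pointwise
      (f := fun n h => u n * h) (g := fun h => g * h) (fun n => hu_mem n) hpt
    rw [continuous_iff_continuousAt]
    intro h₁
    have c1 : ContinuousAt (fun h : G => h * (h₁⁻¹ * h₀)) h₁ := (hright _).continuousAt
    have c2 : ContinuousAt (fun h : G => g * h) (h₁ * (h₁⁻¹ * h₀)) := by
      have : h₁ * (h₁⁻¹ * h₀) = h₀ := by group
      rw [this]; exact hc₀
    have c3 : ContinuousAt (fun h : G => h * (h₀⁻¹ * h₁)) (g * (h₁ * (h₁⁻¹ * h₀))) :=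
      (hright _).continuousAt
    have c21 := ContinuousAt.comp (g := fun h : G => g * h)
      (f := fun h : G => h * (h₁⁻¹ * h₀)) c2 c1
    have := ContinuousAt.comp (g := fun h : G => h * (h₀⁻¹ * h₁))
      (f := (fun h : G => g * h) ∘ (fun h : G => h * (h₁⁻¹ * h₀))) c3 c21
    have heq : (fun h : G => g * h) =
        (fun h : G => h * (h₀⁻¹ * h₁)) ∘ (fun h : G => g * h) ∘
          (fun h : G => h * (h₁⁻¹ * h₀)) := by
      funext h
      simp only [Function.comp_apply]
      group
    rw [heq]
    exact this
  -- Step B : multiplication is jointly continuous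
  have hmul : ContinuousMul G := by
    obtain ⟨a, ha⟩ := exists_forall_continuousAt_of_separately_continuous
      (f := fun g h : G => g * h) (fun y => hright y) (fun x => hleft x)
    constructor
    rw [continuous_iff_continuousAt]
    rintro ⟨g₀, h₀⟩
    have c1 : ContinuousAt
        (fun p : G × G => ((p.1 * (g₀⁻¹ * a), (a⁻¹ * g₀) * p.2) : G × G)) (g₀, h₀) :=
      (((hright _).comp continuous_fst).prodMk
        ((hleft _).comp continuous_snd)).continuousAt
    have c2 : ContinuousAt (fun p : G × G => p.1 * p.2)
        (g₀ * (g₀⁻¹ * a), (a⁻¹ * g₀) * h₀) := by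
      have : g₀ * (g₀⁻¹ * a) = a := by group
      rw [this]; exact ha _
    have := ContinuousAt.comp (g := fun p : G × G => p.1 * p.2)
      (f := fun p : G × G => ((p.1 * (g₀⁻¹ * a), (a⁻¹ * g₀) * p.2) : G × G)) c2 c1
    have heq : (fun p : G × G => p.1 * p.2) =
        (fun p : G × G => p.1 * p.2) ∘
          (fun p : G × G => ((p.1 * (g₀⁻¹ * a), (a⁻¹ * g₀) * p.2) : G × G)) := by
      funext p
      simp only [Function.comp_apply]
      group
    rw [heq]
    exact this
  -- Step C : inversion is continuous via the closed graph over a compact space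
  haveI := hmul
  have hKclosed : IsClosed {p : G × G | p.1 * p.2 = 1} :=
    isClosed_eq continuous_mul continuous_const
  haveI : CompactSpace {p : G × G | p.1 * p.2 = 1} :=
    isCompact_iff_compactSpace.mp hKclosed.isCompact
  let e : {p : G × G | p.1 * p.2 = 1} ≃ G :=
    { toFun := fun p => (p : G × G).1
      invFun := fun g => ⟨(g, g⁻¹), mul_inv_cancel g⟩
      left_inv := by
        rintro ⟨⟨x, y⟩, hxy⟩
        simp only [Set.mem_setOf_eq] at hxy
        have : y = x⁻¹ := eq_inv_of_mul_eq_one_right hxy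
        subst this
        rfl
      right_inv := fun g => rfl }
  have hecont : Continuous e := continuous_fst.comp continuous_subtype_val
  let ee := hecont.homeoOfEquivCompactToT2
  have hinv : Continuous (fun g : G => g⁻¹) := by
    have heq : (fun g : G => g⁻¹) =
        (fun p : {p : G × G | p.1 * p.2 = 1} => (p : G × G).2) ∘ ee.symm := rfl
    rw [heq]
    exact (continuous_snd.comp continuous_subtype_val).comp ee.symm.continuous
  exact { toContinuousMul := hmul, continuous_inv := hinv }
end

section
/- (Milnes) Let G be a compact Hausdorff admissible right topological (CHART) group such that the inversion map g ↦ g⁻¹ is continuous at the identity element e. Then G is a topological group (i.e. multiplication is jointly continuous and inversion is continuous). -/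
open Filter Topology Set Pointwise

section Helpers

/-- In a compact space, a proper filter all of whose cluster points equal `c` converges to `c`. -/
private lemma le_nhds_of_forall_clusterPt {X : Type*} [TopologicalSpace X] [CompactSpace X]
    {F : Filter X} [F.NeBot] {c : X} (h : ∀ y, ClusterPt y F → y = c) : F ≤ 𝓝 c := by
  by_contra hF
  obtain ⟨s, hs, hsF⟩ : ∃ s ∈ 𝓝 c, s ∉ F := by
    by_contra h'
    push_neg at h'
    exact hF fun s hs => h' s hs
  obtain ⟨t, hts, hto, hct⟩ := mem_nhds_iff.mp hs
  have htF : t ∉ F := fun htF => hsF (F.sets_of_superset htF hts)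
  have hne : (F ⊓ 𝓟 tᶜ).NeBot := by
    rw [inf_principal_neBot_iff]
    intro U hU
    exact inter_compl_nonempty_iff.mpr fun hsub => htF (F.sets_of_superset hU hsub)
  obtain ⟨z, hz⟩ := exists_clusterPt_of_compactSpace (F ⊓ 𝓟 tᶜ)
  have hzF : ClusterPt z F := hz.mono inf_le_left
  have hzt : z ∈ closure tᶜ := mem_closure_iff_clusterPt.mpr (hz.mono inf_le_right)
  rw [hto.isClosed_compl.closure_eq] at hzt
  exact hzt ((h z hzF) ▸ hct)

end Helpers

section NamiokaLemma

set_option linter.unusedSectionVars false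
attribute [local instance] Classical.propDecidable

variable {X K : Type*} [TopologicalSpace X] [TopologicalSpace K] [Nonempty X] [Nonempty K]

/-- auxiliary "small column" sets -/
private def DV (f : X → K → ℝ) (xs : ℕ → X) (n : ℕ) : Set K :=
  {k | ∀ j < n, |f (xs j) k| < (1 / 2 : ℝ) ^ n}

private lemma DV_isOpen {f : X → K → ℝ} (hrow : ∀ x, Continuous (f x)) (xs : ℕ → X) (n : ℕ) :
    IsOpen (DV f xs n) := by
  have : DV f xs n = ⋂ j ∈ Finset.range n, {k | |f (xs j) k| < (1 / 2 : ℝ) ^ n} := by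
    ext k; simp [DV, Finset.mem_range]
  rw [this]
  exact isOpen_biInter_finset fun j _ => isOpen_lt ((hrow (xs j)).abs) continuous_const

private lemma DV_zero_subset (f : X → K → ℝ) (xs : ℕ → X) (n : ℕ) :
    {k | ∀ x, f x k = 0} ⊆ DV f xs n := by
  intro k hk j _
  simp only [hk (xs j), abs_zero]
  positivity

variable (f : X → K → ℝ) (ε : ℝ)
  (hcon : ∀ P : Set X, ∀ V : Set K, IsOpen P → P.Nonempty → IsOpen V →
      {k | ∀ x, f x k = 0} ⊆ V → ∃ x ∈ P, ∃ k ∈ V, ε ≤ |f x k|)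

/-- the pair chosen at step `n` -/
private noncomputable def Dpick (n : ℕ) (P : Set X) (xs : ℕ → X) : X × K :=
  if h : IsOpen P ∧ P.Nonempty ∧ IsOpen (DV f xs n) then
    ⟨(hcon P (DV f xs n) h.1 h.2.1 h.2.2 (DV_zero_subset f xs n)).choose,
      (hcon P (DV f xs n) h.1 h.2.1 h.2.2 (DV_zero_subset f xs n)).choose_spec.2.choose⟩
  else Classical.arbitrary _

private lemma Dpick_spec {n : ℕ} {P : Set X} {xs : ℕ → X}
    (hP : IsOpen P) (hPne : P.Nonempty) (hV : IsOpen (DV f xs n)) :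
    (Dpick f ε hcon n P xs).1 ∈ P ∧ (Dpick f ε hcon n P xs).2 ∈ DV f xs n ∧
      ε ≤ |f (Dpick f ε hcon n P xs).1 (Dpick f ε hcon n P xs).2| := by
  rw [Dpick, dif_pos ⟨hP, hPne, hV⟩]
  have hspec := (hcon P (DV f xs n) hP hPne hV (DV_zero_subset f xs n)).choose_spec
  exact ⟨hspec.1, hspec.2.choose_spec.1, hspec.2.choose_spec.2⟩

/-- the state after `n` steps -/
private noncomputable def Dst : ℕ → Set X × (ℕ → X)
  | 0 => (Set.univ, fun _ => Classical.arbitrary X)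
  | n + 1 =>
    let s := Dst n
    let pr := Dpick f ε hcon n s.1 s.2
    (s.1 ∩ {x | ε / 2 < |f x pr.2|}, Function.update s.2 n pr.1)

private noncomputable def DxS (n : ℕ) : X := (Dpick f ε hcon n (Dst f ε hcon n).1 (Dst f ε hcon n).2).1

private noncomputable def DkS (n : ℕ) : K := (Dpick f ε hcon n (Dst f ε hcon n).1 (Dst f ε hcon n).2).2

private lemma Dst_succ (n : ℕ) :
    Dst f ε hcon (n + 1) =
      ((Dst f ε hcon n).1 ∩ {x | ε / 2 < |f x (DkS f ε hcon n)|},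
        Function.update (Dst f ε hcon n).2 n (DxS f ε hcon n)) := rfl

variable {f ε}

private lemma Dst_inv (hrow : ∀ x, Continuous (f x)) (hcol : ∀ k, Continuous fun x => f x k)
    (hε : 0 < ε) : ∀ n, IsOpen (Dst f ε hcon n).1 ∧ (Dst f ε hcon n).1.Nonempty := by
  intro n
  induction n with
  | zero => exact ⟨isOpen_univ, univ_nonempty⟩
  | succ n ih =>
    rw [Dst_succ]
    have hsp := Dpick_spec f ε hcon (xs := (Dst f ε hcon n).2) ih.1 ih.2 (DV_isOpen hrow _ n)
    constructor
    · exact ih.1.inter (isOpen_lt continuous_const ((hcol _).abs))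
    · refine ⟨DxS f ε hcon n, hsp.1, ?_⟩
      simp only [Set.mem_setOf_eq]
      calc ε / 2 < ε := by linarith
        _ ≤ |f (DxS f ε hcon n) (DkS f ε hcon n)| := hsp.2.2

private lemma Dst_spec (hrow : ∀ x, Continuous (f x)) (hcol : ∀ k, Continuous fun x => f x k)
    (hε : 0 < ε) (n : ℕ) :
    DxS f ε hcon n ∈ (Dst f ε hcon n).1 ∧ DkS f ε hcon n ∈ DV f (Dst f ε hcon n).2 n ∧
      ε ≤ |f (DxS f ε hcon n) (DkS f ε hcon n)| :=
  Dpick_spec f ε hcon (Dst_inv hcon hrow hcol hε n).1 (Dst_inv hcon hrow hcol hε n).2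
    (DV_isOpen hrow _ n)

private lemma Dst_hist : ∀ n j, j < n → (Dst f ε hcon n).2 j = DxS f ε hcon j := by
  intro n
  induction n with
  | zero => intro j hj; omega
  | succ n ih =>
    intro j hj
    rw [Dst_succ]
    rcases Nat.lt_succ_iff_lt_or_eq.mp hj with h | h
    · simp only [Function.update_of_ne (Nat.ne_of_lt h)]
      exact ih j h
    · subst h
      simp

private lemma Dst_mono : ∀ n m, n ≤ m → (Dst f ε hcon m).1 ⊆ (Dst f ε hcon n).1 := by
  intro n m hnm
  induction m with
  | zero => have : n = 0 := Nat.le_zero.mp hnm; subst this; exact subset_rfl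
  | succ m ih =>
    rcases Nat.le_succ_iff.mp hnm with h | h
    · have hstep : (Dst f ε hcon (m + 1)).1 ⊆ (Dst f ε hcon m).1 := by
        rw [Dst_succ]; exact Set.inter_subset_left
      exact hstep.trans (ih h)
    · subst h; exact subset_rfl

private lemma D_E1 (hrow : ∀ x, Continuous (f x)) (hcol : ∀ k, Continuous fun x => f x k)
    (hε : 0 < ε) {n m : ℕ} (h : n < m) :
    ε / 2 < |f (DxS f ε hcon m) (DkS f ε hcon n)| := by
  have hx : DxS f ε hcon m ∈ (Dst f ε hcon m).1 := (Dst_spec hcon hrow hcol hε m).1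
  have := Dst_mono hcon (n + 1) m h (hx)
  rw [Dst_succ] at this
  exact this.2

private lemma D_E2 (hrow : ∀ x, Continuous (f x)) (hcol : ∀ k, Continuous fun x => f x k)
    (hε : 0 < ε) {n m : ℕ} (h : n < m) :
    |f (DxS f ε hcon n) (DkS f ε hcon m)| < (1 / 2 : ℝ) ^ m := by
  have hk := (Dst_spec hcon hrow hcol hε m).2.1
  have := hk n h
  rwa [Dst_hist hcon m n h] at this

/-- Namioka-type lemma: a separately continuous real function on a product of compact spaces
which vanishes on `X × K₀` is uniformly small on `P × V` for some nonempty open `P` and some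
open `V ⊇ K₀`. -/
private lemma exists_open_small [CompactSpace X] [CompactSpace K]
    (f : X → K → ℝ) (hrow : ∀ x, Continuous (f x)) (hcol : ∀ k, Continuous fun x => f x k)
    {ε : ℝ} (hε : 0 < ε) :
    ∃ (P : Set X) (V : Set K), IsOpen P ∧ P.Nonempty ∧ IsOpen V ∧
      {k | ∀ x, f x k = 0} ⊆ V ∧ ∀ x ∈ P, ∀ k ∈ V, |f x k| < ε := by
  by_contra hc
  push_neg at hc
  have hcon : ∀ P : Set X, ∀ V : Set K, IsOpen P → P.Nonempty → IsOpen V →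
      {k | ∀ x, f x k = 0} ⊆ V → ∃ x ∈ P, ∃ k ∈ V, ε ≤ |f x k| := by
    intro P V hP hPne hV hV0
    exact hc P V hP hPne hV hV0
  set x : ℕ → X := DxS f ε hcon with hxdef
  set k : ℕ → K := DkS f ε hcon with hkdef
  -- an ultrafilter extending `atTop`
  let 𝒰 : Ultrafilter ℕ := Ultrafilter.of Filter.atTop
  have h𝒰 : (𝒰 : Filter ℕ) ≤ Filter.atTop := Ultrafilter.of_le _
  obtain ⟨xstar, -, hxstar⟩ :=
    isCompact_univ.ultrafilter_le_nhds (𝒰.map x) (by simp [le_principal_iff])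
  obtain ⟨kstar, -, hkstar⟩ :=
    isCompact_univ.ultrafilter_le_nhds (𝒰.map k) (by simp [le_principal_iff])
  have hxt : Tendsto x (𝒰 : Filter ℕ) (𝓝 xstar) := hxstar
  have hkt : Tendsto k (𝒰 : Filter ℕ) (𝓝 kstar) := hkstar
  -- (A) the limit point xstar has large values at all columns
  have hA : ∀ n, ε / 2 ≤ |f xstar (k n)| := by
    intro n
    have hev : ∀ᶠ m in (𝒰 : Filter ℕ), x m ∈ {z : X | ε / 2 ≤ |f z (k n)|} := by
      have : ∀ᶠ m in Filter.atTop, x m ∈ {z : X | ε / 2 ≤ |f z (k n)|} := by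
        filter_upwards [Filter.eventually_gt_atTop n] with m hm
        exact le_of_lt (D_E1 hcon hrow hcol hε hm)
      exact this.filter_mono h𝒰
    have hcl : IsClosed {z : X | ε / 2 ≤ |f z (k n)|} :=
      isClosed_le continuous_const ((hcol (k n)).abs)
    exact hcl.mem_of_tendsto hxt hev
  -- (B) hence at kstar
  have hB : ε / 2 ≤ |f xstar kstar| := by
    have ht : Tendsto (fun n => f xstar (k n)) (𝒰 : Filter ℕ) (𝓝 (f xstar kstar)) :=
      ((hrow xstar).tendsto kstar).comp hkt
    have hcl : IsClosed {r : ℝ | ε / 2 ≤ |r|} := isClosed_le continuous_const continuous_abs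
    exact hcl.mem_of_tendsto ht (Filter.Eventually.of_forall hA)
  -- (C) each row vanishes at kstar
  have hC : ∀ n, f (x n) kstar = 0 := by
    intro n
    have ht : Tendsto (fun m => f (x n) (k m)) (𝒰 : Filter ℕ) (𝓝 (f (x n) kstar)) :=
      ((hrow (x n)).tendsto kstar).comp hkt
    have hle : ∀ δ : ℝ, 0 < δ → |f (x n) kstar| ≤ δ := by
      intro δ hδ
      have hsmall : ∀ᶠ m in Filter.atTop, (1 / 2 : ℝ) ^ m < δ := by
        have h0 : Tendsto (fun m : ℕ => (1 / 2 : ℝ) ^ m) Filter.atTop (𝓝 0) :=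
          tendsto_pow_atTop_nhds_zero_of_lt_one (by norm_num) (by norm_num)
        exact h0.eventually (Filter.Tendsto.eventually_lt_const hδ tendsto_id)
      have hev : ∀ᶠ m in (𝒰 : Filter ℕ), f (x n) (k m) ∈ {r : ℝ | |r| ≤ δ} := by
        have : ∀ᶠ m in Filter.atTop, f (x n) (k m) ∈ {r : ℝ | |r| ≤ δ} := by
          filter_upwards [Filter.eventually_gt_atTop n, hsmall] with m hm hsm
          exact le_of_lt (lt_trans (D_E2 hcon hrow hcol hε hm) hsm)
        exact this.filter_mono h𝒰
      have hcl : IsClosed {r : ℝ | |r| ≤ δ} := isClosed_le continuous_abs continuous_const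
      exact hcl.mem_of_tendsto ht hev
    by_contra h0
    have habs : 0 < |f (x n) kstar| := abs_pos.mpr h0
    have := hle (|f (x n) kstar| / 2) (by linarith)
    linarith
  -- (D) contradiction
  have hD : Tendsto (fun n => f (x n) kstar) (𝒰 : Filter ℕ) (𝓝 (f xstar kstar)) :=
    ((hcol kstar).tendsto xstar).comp hxt
  have hD0 : Tendsto (fun n => f (x n) kstar) (𝒰 : Filter ℕ) (𝓝 0) := by
    have : (fun n => f (x n) kstar) = fun _ => (0 : ℝ) := funext hC
    rw [this]; exact tendsto_const_nhds
  have : f xstar kstar = 0 := tendsto_nhds_unique hD hD0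
  rw [this, abs_zero] at hB
  linarith

end NamiokaLemma

set_option maxHeartbeats 1000000 in
/-- (Milnes) A CHART group (compact Hausdorff admissible right topological group)
in which inversion is continuous at the identity is a topological group. -/
theorem topologicalGroup_of_chart_continuousAt_inv_one {G : Type*} [Group G]
    [TopologicalSpace G] [CompactSpace G] [T2Space G]
    (hright : ∀ h : G, Continuous fun g : G => g * h)
    (hadm : Dense {g : G | Continuous fun h : G => g * h})
    (hinv : ContinuousAt (fun g : G => g⁻¹) 1) :
    IsTopologicalGroup G := by
  -- Step 1 : inversion is continuous everywhere
  have hconti : Continuous fun g : G => g⁻¹ := by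
    rw [continuous_iff_continuousAt]
    intro x
    have key : Filter.map (fun g : G => g⁻¹) (𝓝 x) ≤ 𝓝 x⁻¹ := by
      apply le_nhds_of_forall_clusterPt
      intro y hy
      by_contra hne'
      have hyx : y⁻¹ ≠ x := fun hh => hne' (by rw [← hh, inv_inv])
      obtain ⟨o₁, o₂, ho₁, ho₂, hyo₁, hxo₂, hdisj⟩ := t2_separation hyx
      have hM₁ : (fun z : G => z * y⁻¹) ⁻¹' o₁ ∈ 𝓝 (1 : G) := by
        apply (hright y⁻¹).continuousAt.preimage_mem_nhds
        simpa using ho₁.mem_nhds hyo₁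
      have hM₂ : (fun z : G => z⁻¹ * x) ⁻¹' o₂ ∈ 𝓝 (1 : G) := by
        have c : ContinuousAt (fun z : G => z⁻¹ * x) 1 := by
          have : ContinuousAt (fun z : G => z * x) (1 : G)⁻¹ := (hright x).continuousAt
          exact this.comp hinv
        apply c.preimage_mem_nhds
        simpa using ho₂.mem_nhds hxo₂
      obtain ⟨U, hUn, hUc, hUsub⟩ := exists_mem_nhds_isClosed_subset (inter_mem hM₁ hM₂)
      have hVmem : U ∩ (fun z : G => z⁻¹) ⁻¹' U ∈ 𝓝 (1 : G) :=
        inter_mem hUn (hinv.preimage_mem_nhds (by simpa using hUn))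
      set V := U ∩ (fun z : G => z⁻¹) ⁻¹' U with hV
      have h1V : (1 : G) ∈ interior V := mem_interior_iff_mem_nhds.mpr hVmem
      have hopen : IsOpen ((fun g : G => g * y) ⁻¹' interior V) :=
        isOpen_interior.preimage (hright y)
      have hnon : ((fun g : G => g * y) ⁻¹' interior V).Nonempty :=
        ⟨y⁻¹, by simpa using h1V⟩
      obtain ⟨l, hlΛ, hly⟩ := hadm.exists_mem_open hopen hnon
      have hlΛ' : Continuous fun h : G => l * h := hlΛ
      -- the auxiliary filter F₀
      set F₀ : Filter G :=
        Filter.map (fun g : G => g⁻¹) (𝓝 y ⊓ Filter.map (fun g : G => g⁻¹) (𝓝 x)) with hF₀def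
      have hinvinv : ((fun g : G => g⁻¹) ∘ fun g : G => g⁻¹) = (id : G → G) :=
        funext fun g => inv_inv g
      have hF₀ne : F₀.NeBot := by
        have : (𝓝 y ⊓ Filter.map (fun g : G => g⁻¹) (𝓝 x)).NeBot := hy
        exact this.map _
      have hF₀x : F₀ ≤ 𝓝 x := by
        have h1 : F₀ ≤ Filter.map (fun g : G => g⁻¹) (Filter.map (fun g : G => g⁻¹) (𝓝 x)) :=
          Filter.map_mono inf_le_right
        rwa [Filter.map_map, hinvinv, Filter.map_id] at h1
      have hF₀y : Filter.map (fun g : G => g⁻¹) F₀ ≤ 𝓝 y := by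
        rw [hF₀def, Filter.map_map, hinvinv, Filter.map_id]
        exact inf_le_left
      -- B' ∈ F₀ and then B ∈ F₀
      have hpre : (fun z : G => l * z) ⁻¹' interior V ∈ 𝓝 y :=
        hlΛ'.continuousAt.preimage_mem_nhds (isOpen_interior.mem_nhds hly)
      have hB' : {w : G | l * w⁻¹ ∈ interior V} ∈ F₀ := hF₀y hpre
      have hB : {w : G | w * l⁻¹ ∈ U} ∈ F₀ := by
        filter_upwards [hB'] with w hw
        have h1 : l * w⁻¹ ∈ V := interior_subset hw
        have h2 : (l * w⁻¹)⁻¹ ∈ U := h1.2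
        simpa [mul_inv_rev, inv_inv] using h2
      have hxB : x * l⁻¹ ∈ U := by
        have hcl : IsClosed {w : G | w * l⁻¹ ∈ U} := hUc.preimage (hright l⁻¹)
        have hclx : ClusterPt x F₀ := by
          rw [ClusterPt, inf_of_le_right hF₀x]
          exact hF₀ne
        have hmem : x ∈ closure {w : G | w * l⁻¹ ∈ U} :=
          mem_closure_iff_clusterPt.mpr (hclx.mono (le_principal_iff.mpr hB))
        rwa [hcl.closure_eq] at hmem
      -- contradiction
      have hl1 : l ∈ o₁ := by
        have h1 : l * y ∈ U := (interior_subset hly).1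
        have h2 : l * y ∈ (fun z : G => z * y⁻¹) ⁻¹' o₁ := (hUsub h1).1
        simpa [mul_assoc] using h2
      have hl2 : l ∈ o₂ := by
        have h2 : x * l⁻¹ ∈ (fun z : G => z⁻¹ * x) ⁻¹' o₂ := (hUsub hxB).2
        simpa [mul_inv_rev, inv_inv, mul_assoc] using h2
      exact Set.disjoint_left.mp hdisj hl1 hl2
    exact key
  -- Step 2 : left translations are continuous
  have hleft : ∀ g : G, Continuous fun h : G => g * h := by
    intro g
    have hfun : (fun h : G => g * h) =
        (fun z : G => z⁻¹) ∘ (fun z : G => z * g⁻¹) ∘ fun z : G => z⁻¹ := by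
      funext h
      simp [mul_inv_rev, inv_inv]
    rw [hfun]
    exact hconti.comp ((hright g⁻¹).comp hconti)
  -- Step 3 : the key smallness lemma
  have hL : ∀ N ∈ 𝓝 (1 : G), IsClosed N → ∃ p ∈ N, ∃ A ∈ 𝓝 (1 : G), ∃ V ∈ 𝓝 (1 : G),
      closure ((fun z : G => p * z) '' (A * V)) ⊆ N := by
    intro N hN hNc
    obtain ⟨U₁c, hU₁mem, hU₁c, hU₁sub⟩ := exists_mem_nhds_isClosed_subset hN
    set U₁ : Set G := interior U₁c with hU₁def
    have hU₁o : IsOpen U₁ := isOpen_interior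
    have h1U₁ : (1 : G) ∈ U₁ := mem_interior_iff_mem_nhds.mpr hU₁mem
    obtain ⟨Wc, hWmem, hWc, hWsub⟩ := exists_mem_nhds_isClosed_subset (hU₁o.mem_nhds h1U₁)
    set W : Set G := interior Wc with hWdef
    have hWo : IsOpen W := isOpen_interior
    have h1W : (1 : G) ∈ W := mem_interior_iff_mem_nhds.mpr hWmem
    have hclW : closure W ⊆ U₁ := (closure_minimal interior_subset hWc).trans hWsub
    -- Urysohn function : 0 on closure W, 1 outside U₁
    obtain ⟨φ, hφ0, hφ1, hφ01⟩ :=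
      exists_continuous_zero_one_of_isClosed (isClosed_closure (s := W))
        (hU₁o.isClosed_compl) (by rwa [Set.disjoint_compl_right_iff_subset])
    -- the compact space X := closure W
    haveI hXcpt : CompactSpace (closure W) :=
      isCompact_iff_compactSpace.mp (IsClosed.isCompact isClosed_closure)
    haveI hXne : Nonempty (closure W) := ⟨⟨1, subset_closure h1W⟩⟩
    set f : closure W → G → ℝ := fun x k => φ (x.1 * k) with hfdef
    have hrow : ∀ x : closure W, Continuous (f x) := fun x => φ.continuous.comp (hleft x.1)
    have hcol : ∀ k : G, Continuous fun x : closure W => f x k := fun k =>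
      φ.continuous.comp ((hright k).comp continuous_subtype_val)
    obtain ⟨P, V, hPo, hPne, hVo, hV0, hsmall⟩ :=
      exists_open_small f hrow hcol (ε := 1 / 2) (by norm_num)
    -- V is a neighborhood of 1
    have h1V : (1 : G) ∈ V := by
      apply hV0
      intro x
      simp only [hfdef, mul_one]
      exact hφ0 x.2
    -- P comes from an open set O of G
    obtain ⟨O, hOo, hOP⟩ := isOpen_induced_iff.mp hPo
    obtain ⟨x₀, hx₀⟩ := hPne
    have hx₀O : (x₀ : G) ∈ O := by
      rw [← hOP] at hx₀
      exact hx₀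
    obtain ⟨p, hpO, hpW⟩ := (mem_closure_iff.mp x₀.2) O hOo hx₀O
    set A : Set G := (fun z : G => p * z) ⁻¹' (O ∩ W) with hAdef
    have hAo : IsOpen A := (hOo.inter hWo).preimage (hleft p)
    have h1A : (1 : G) ∈ A := by
      simp only [hAdef, Set.mem_preimage, mul_one]
      exact ⟨hpO, hpW⟩
    have himg : ∀ a ∈ A, ∀ v ∈ V, p * (a * v) ∈ U₁ := by
      intro a ha v hv
      have hq : p * a ∈ O ∩ W := ha
      have hqmem : (p * a : G) ∈ closure W := subset_closure hq.2
      have hqP : (⟨p * a, hqmem⟩ : closure W) ∈ P := by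
        rw [← hOP]
        exact hq.1
      have hlt := hsmall _ hqP v hv
      simp only [hfdef] at hlt
      by_contra hnot
      have heq : φ (p * a * v) = 1 := by
        have := hφ1 hnot
        simpa [mul_assoc] using this
      rw [heq] at hlt
      norm_num at hlt
    have hpN : p ∈ N := hU₁sub (interior_subset (hWsub (interior_subset hpW)))
    refine ⟨p, hpN, A, hAo.mem_nhds h1A, V, hVo.mem_nhds h1V, ?_⟩
    have himg' : (fun z : G => p * z) '' (A * V) ⊆ U₁ := by
      rintro t ⟨z, hz, rfl⟩
      obtain ⟨a, ha, v, hv, rfl⟩ := hz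
      exact himg a ha v hv
    exact (closure_mono himg').trans
      ((closure_minimal interior_subset hU₁c).trans hU₁sub)

  -- Step 4 : products of small neighborhoods are small
  have hG1 : ∀ U ∈ 𝓝 (1 : G), ∃ A ∈ 𝓝 (1 : G), ∃ B ∈ 𝓝 (1 : G), A * B ⊆ U := by
    intro U hU
    by_contra hcontra
    push_neg at hcontra
    have hne : ((𝓝 (1 : G)) * (𝓝 (1 : G)) ⊓ 𝓟 Uᶜ).NeBot := by
      rw [inf_principal_neBot_iff]
      intro S hS
      obtain ⟨A, hA, B, hB, hABS⟩ := Filter.mem_mul.mp hS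
      obtain ⟨z, hzAB, hzU⟩ := Set.not_subset.mp (hcontra A hA B hB)
      exact ⟨z, hABS hzAB, hzU⟩
    obtain ⟨s, hs⟩ := exists_clusterPt_of_compactSpace ((𝓝 (1 : G)) * (𝓝 (1 : G)) ⊓ 𝓟 Uᶜ)
    have hs1 : ClusterPt s ((𝓝 (1 : G)) * (𝓝 (1 : G))) := hs.mono inf_le_left
    have hs2 : s ∈ closure Uᶜ := mem_closure_iff_clusterPt.mpr (hs.mono inf_le_right)
    have hsne : s ≠ 1 := by
      intro h
      subst h
      obtain ⟨w, hw1, hw2⟩ := (mem_closure_iff.mp hs2) (interior U) isOpen_interior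
        (mem_interior_iff_mem_nhds.mpr hU)
      exact hw2 (interior_subset hw1)
    obtain ⟨u, v, huo, hvo, hsu, h1v, hdisj⟩ := t2_separation hsne
    have hM₁ : (fun z : G => z * s) ⁻¹' u ∈ 𝓝 (1 : G) := by
      apply (hright s).continuousAt.preimage_mem_nhds
      simpa using huo.mem_nhds hsu
    obtain ⟨N, hNmem, hNc, hNsub⟩ :=
      exists_mem_nhds_isClosed_subset (inter_mem hM₁ (hvo.mem_nhds h1v))
    obtain ⟨p, hpN, A, hA, V, hV, hclsub⟩ := hL N hNmem hNc
    have hsAV : s ∈ closure (A * V) := by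
      have hmem : A * V ∈ (𝓝 (1 : G)) * (𝓝 (1 : G)) := Filter.mul_mem_mul hA hV
      exact mem_closure_iff_clusterPt.mpr (hs1.mono (le_principal_iff.mpr hmem))
    have hpsN : p * s ∈ N := by
      apply hclsub
      exact image_closure_subset_closure_image (hleft p) ⟨s, hsAV, rfl⟩
    have hpu : p * s ∈ u := (hNsub hpN).1
    have hpv : p * s ∈ v := (hNsub hpsN).2
    exact Set.disjoint_left.mp hdisj hpu hpv
  -- Step 5 : multiplication is jointly continuous
  have hmul : Continuous fun q : G × G => q.1 * q.2 := by
    rw [continuous_iff_continuousAt]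
    rintro ⟨a, b⟩
    rw [ContinuousAt, Filter.tendsto_def]
    intro U' hU'
    have hψ : Continuous fun z : G => a * (z * b) := (hleft a).comp (hright b)
    have hψ1 : (fun z : G => a * (z * b)) 1 = a * b := by simp
    have hpre : (fun z : G => a * (z * b)) ⁻¹' U' ∈ 𝓝 (1 : G) := by
      apply hψ.continuousAt.preimage_mem_nhds
      simpa using hU'
    obtain ⟨A, hA, B, hB, hAB⟩ := hG1 _ hpre
    have hAx : (fun z : G => a⁻¹ * z) ⁻¹' A ∈ 𝓝 a := by
      apply (hleft a⁻¹).continuousAt.preimage_mem_nhds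
      simpa using hA
    have hBy : (fun z : G => z * b⁻¹) ⁻¹' B ∈ 𝓝 b := by
      apply (hright b⁻¹).continuousAt.preimage_mem_nhds
      simpa using hB
    rw [nhds_prod_eq]
    apply Filter.mem_of_superset (Filter.prod_mem_prod hAx hBy)
    rintro ⟨x, y⟩ ⟨hx, hy⟩
    have hz : (a⁻¹ * x) * (y * b⁻¹) ∈ A * B := Set.mul_mem_mul hx hy
    have := hAB hz
    simp only [Set.mem_preimage] at this
    have harr : a * ((a⁻¹ * x) * (y * b⁻¹) * b) = x * y := by
      group
    rwa [harr] at this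
  -- Step 6 : assemble
  haveI : ContinuousMul G := ⟨hmul⟩
  haveI : ContinuousInv G := ⟨hconti⟩
  constructor
end

section
/- Let G be a compact Hausdorff admissible right topological (CHART) group such that the multiplication map G × G → G, (g,h) ↦ g·h, is continuous at the point (e,e), where e is the identity element. Then G is a topological group (i.e. multiplication is jointly continuous and inversion is continuous). -/
open Filter Topology Set

section Chart

variable {G : Type*} [Group G] [TopologicalSpace G] [CompactSpace G] [T2Space G]

/-- Right translation as a homeomorphism. -/
noncomputable def chartHomeoRight (hright : ∀ h : G, Continuous fun g : G => g * h) (h : G) :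
    G ≃ₜ G :=
  Continuous.homeoOfEquivCompactToT2 (f := Equiv.mulRight h)
    (by simpa using hright h)

lemma chart_nhds_eq (hright : ∀ h : G, Continuous fun g : G => g * h) (a : G) :
    𝓝 a = Filter.map (fun g : G => g * a) (𝓝 1) := by
  have := ((chartHomeoRight hright a).map_nhds_eq 1).symm
  simpa [chartHomeoRight, Continuous.homeoOfEquivCompactToT2] using this

/-- Lemma A: inversion is continuous at 1. -/
lemma chart_inv_tendsto (hright : ∀ h : G, Continuous fun g : G => g * h)
    (hmul : ContinuousAt (fun p : G × G => p.1 * p.2) (1, 1)) :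
    Tendsto (fun g : G => g⁻¹) (𝓝 (1 : G)) (𝓝 (1 : G)) := by
  have hmul' : Tendsto (fun p : G × G => p.1 * p.2) (𝓝 1 ×ˢ 𝓝 1) (𝓝 1) := by
    have := hmul
    simp only [ContinuousAt, one_mul] at this
    rwa [nhds_prod_eq] at this
  rw [tendsto_iff_ultrafilter]
  intro U hU
  set V : Ultrafilter G := U.map fun g => g⁻¹ with hV
  have hw : (V : Filter G) ≤ 𝓝 V.lim := V.le_nhds_lim
  have hw' : Tendsto (fun g : G => g⁻¹) U (𝓝 V.lim) := hw
  have h1 : Tendsto (fun g : G => g⁻¹ * V.lim⁻¹) U (𝓝 (1 : G)) := by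
    have := (hright V.lim⁻¹).continuousAt (x := V.lim) |>.tendsto.comp hw'
    simpa [Function.comp_def] using this
  have h2 : Tendsto (fun g : G => (g, g⁻¹ * V.lim⁻¹)) U (𝓝 1 ×ˢ 𝓝 1) :=
    (Tendsto.prodMk hU h1)
  have h3 : Tendsto (fun g : G => g * (g⁻¹ * V.lim⁻¹)) U (𝓝 (1 : G)) := hmul'.comp h2
  have h4 : Tendsto (fun g : G => g * (g⁻¹ * V.lim⁻¹) * V.lim) U (𝓝 (1 * V.lim)) :=
    ((hright V.lim).tendsto 1).comp h3
  rw [one_mul] at h4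
  have h5 : (fun g : G => g * (g⁻¹ * V.lim⁻¹) * V.lim) = fun _ : G => (1 : G) := by
    funext g; simp [mul_assoc]
  rw [h5] at h4
  have : (1 : G) = V.lim := tendsto_nhds_unique tendsto_const_nhds h4
  rwa [← this] at hw'

/-- Λ is closed under inverses. -/
lemma chart_lambda_inv {lam : G} (hlam : Continuous fun h : G => lam * h) :
    Continuous fun h : G => lam⁻¹ * h := by
  have h : Continuous ⇑(Equiv.mulLeft lam) := by
    rw [Equiv.coe_mulLeft]; exact hlam
  have h2 := h.continuous_symm_of_equiv_compact_to_t2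
  rwa [Equiv.mulLeft_symm, Equiv.coe_mulLeft] at h2

lemma chart_left_tendsto (hright : ∀ h : G, Continuous fun g : G => g * h)
    (hadm : Dense {g : G | Continuous fun h : G => g * h})
    (hmul : ContinuousAt (fun p : G × G => p.1 * p.2) (1, 1)) (a : G) :
    Tendsto (fun h : G => a * h) (𝓝 (1 : G)) (𝓝 a) := by
  have hinv := chart_inv_tendsto hright hmul
  have hmul' : Tendsto (fun p : G × G => p.1 * p.2) (𝓝 1 ×ˢ 𝓝 1) (𝓝 1) := by
    have := hmul
    simp only [ContinuousAt, one_mul] at this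
    rwa [nhds_prod_eq] at this
  set S : G → Set G := fun x => ⋂ V ∈ 𝓝 (1 : G), closure ((fun v => x * v) '' V) with hS
  have fact2 : ∀ x c : G, c ∈ S x → ∀ lam : G, (Continuous fun h : G => lam * h) →
      c * lam ∈ S (x * lam) := by
    intro x c hc lam hlam
    simp only [hS, mem_iInter] at hc ⊢
    intro V hV
    have hphi : Continuous fun v : G => lam⁻¹ * v * lam :=
      (hright lam).comp (chart_lambda_inv hlam)
    have hW : (fun v : G => lam⁻¹ * v * lam) ⁻¹' V ∈ 𝓝 (1 : G) := by
      apply hphi.continuousAt.preimage_mem_nhds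
      simpa using hV
    have hc' := hc _ hW
    have hcoe : ⇑(chartHomeoRight hright lam) = fun g : G => g * lam := rfl
    have himg := (chartHomeoRight hright lam).image_closure
      ((fun v => x * v) '' ((fun v : G => lam⁻¹ * v * lam) ⁻¹' V))
    rw [hcoe] at himg
    have hmem : c * lam ∈ closure ((fun g : G => g * lam) ''
        ((fun v => x * v) '' ((fun v : G => lam⁻¹ * v * lam) ⁻¹' V))) := by
      rw [← himg]
      exact Set.mem_image_of_mem _ hc'
    refine closure_mono ?_ hmem
    rintro _ ⟨_, ⟨w, hw, rfl⟩, rfl⟩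
    refine ⟨lam⁻¹ * w * lam, hw, ?_⟩
    simp [mul_assoc]
  rw [tendsto_iff_ultrafilter]
  intro U hU
  set c := (U.map fun g : G => a * g).lim with hcdef
  have hUc : Tendsto (fun g : G => a * g) U (𝓝 c) := (U.map fun g : G => a * g).le_nhds_lim
  have hcS : c ∈ S a := by
    simp only [hS, mem_iInter]
    intro V hV
    exact mem_closure_of_tendsto hUc
      (by filter_upwards [hU hV] with g hg using Set.mem_image_of_mem _ hg)
  haveI hne : (𝓝 a ⊓ 𝓟 {g : G | Continuous fun h : G => g * h}).NeBot :=
    mem_closure_iff_clusterPt.mp (hadm a)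
  obtain ⟨W, hW⟩ := (𝓝 a ⊓ 𝓟 {g : G | Continuous fun h : G => g * h}).exists_ultrafilter_le
  have hWa : (W : Filter G) ≤ 𝓝 a := hW.trans inf_le_left
  have hWL : ∀ᶠ l in (W : Filter G), Continuous fun h : G => l * h :=
    le_principal_iff.mp (hW.trans inf_le_right)
  have hf : Tendsto (fun l : G => a * l⁻¹) W (𝓝 (1 : G)) := by
    have t1 : Tendsto (fun l : G => l * a⁻¹) W (𝓝 (1 : G)) := by
      have := ((hright a⁻¹).tendsto a).comp hWa
      simpa [Function.comp_def] using this
    have := hinv.comp t1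
    simpa only [Function.comp_def, mul_inv_rev, inv_inv] using this
  set y := (W.map fun l : G => c * l⁻¹).lim with hydef
  have hWy : Tendsto (fun l : G => c * l⁻¹) W (𝓝 y) :=
    (W.map fun l : G => c * l⁻¹).le_nhds_lim
  have hycl : ∀ V ∈ 𝓝 (1 : G), y ∈ closure V := by
    intro V hV
    have hVp : (fun p : G × G => p.1 * p.2) ⁻¹' V ∈ 𝓝 (1 : G) ×ˢ 𝓝 (1 : G) := hmul' hV
    rw [Filter.mem_prod_iff] at hVp
    obtain ⟨P, hP, Q, hQ, hsub⟩ := hVp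
    have hR : P ∩ Q ∈ 𝓝 (1 : G) := Filter.inter_mem hP hQ
    have hev : ∀ᶠ l in (W : Filter G), c * l⁻¹ ∈ closure V := by
      filter_upwards [hf hR, hWL] with l hl hlam
      have h1 : c * l⁻¹ ∈ S (a * l⁻¹) := fact2 a c hcS l⁻¹ (chart_lambda_inv hlam)
      simp only [hS, mem_iInter] at h1
      have h2 := h1 _ hR
      refine closure_mono ?_ h2
      rintro _ ⟨v, hv, rfl⟩
      exact hsub (Set.mk_mem_prod hl.1 hv.2)
    exact isClosed_closure.mem_of_tendsto hWy hev
  have hy1 : y = (1 : G) := by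
    have hcp : ClusterPt y (𝓝 (1 : G)) := by
      rw [clusterPt_iff_nonempty]
      intro U1 hU1 V1 hV1
      exact mem_closure_iff_nhds.mp (hycl _ hV1) _ hU1
    exact eq_of_nhds_neBot hcp
  rw [hy1] at hWy
  have h6 : Tendsto (fun l : G => (c * l⁻¹)⁻¹) W (𝓝 (1 : G)) := hinv.comp hWy
  have h7 : Tendsto (fun l : G => l * c⁻¹) W (𝓝 (1 : G)) := by
    simpa only [Function.comp_def, mul_inv_rev, inv_inv] using h6
  have h8 : Tendsto (fun l : G => l * c⁻¹) W (𝓝 (a * c⁻¹)) := ((hright c⁻¹).tendsto a).comp hWa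
  have hac : a * c⁻¹ = 1 := tendsto_nhds_unique h8 h7
  have hca : c = a := by
    rw [mul_inv_eq_one] at hac
    exact hac.symm
  rwa [hca] at hUc

end Chart

/-- A CHART group (compact Hausdorff admissible right topological group) whose
multiplication is continuous at `(e, e)` is a topological group. -/
theorem topologicalGroup_of_chart_continuousAt_mul_one_one {G : Type*} [Group G]
    [TopologicalSpace G] [CompactSpace G] [T2Space G]
    (hright : ∀ h : G, Continuous fun g : G => g * h)
    (hadm : Dense {g : G | Continuous fun h : G => g * h})
    (hmul : ContinuousAt (fun p : G × G => p.1 * p.2) (1, 1)) :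
    IsTopologicalGroup G := by
  have hleft := chart_left_tendsto hright hadm hmul
  have hinv := chart_inv_tendsto hright hmul
  have hmul' : Tendsto (fun p : G × G => p.1 * p.2) (𝓝 1 ×ˢ 𝓝 1) (𝓝 1) := by
    have := hmul
    simp only [ContinuousAt, one_mul] at this
    rwa [nhds_prod_eq] at this
  have contMul : ContinuousMul G := by
    constructor
    rw [continuous_iff_continuousAt]
    rintro ⟨a, b⟩
    unfold ContinuousAt
    rw [nhds_prod_eq, chart_nhds_eq hright a, chart_nhds_eq hright b,
      Filter.prod_map_map_eq, Filter.tendsto_map'_iff]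
    have key : Tendsto (fun p : G × G => (p.1 * (a * p.2 * a⁻¹)) * (a * b))
        (𝓝 1 ×ˢ 𝓝 1) (𝓝 (a * b)) := by
      have hconj : Tendsto (fun v : G => a * v * a⁻¹) (𝓝 (1 : G)) (𝓝 (1 : G)) := by
        have := ((hright a⁻¹).tendsto a).comp (hleft a)
        simpa [Function.comp_def] using this
      have h1 : Tendsto (fun p : G × G => (p.1, a * p.2 * a⁻¹)) (𝓝 1 ×ˢ 𝓝 1)
          (𝓝 1 ×ˢ 𝓝 1) := tendsto_fst.prodMk (hconj.comp tendsto_snd)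
      have h2 := hmul'.comp h1
      have h3 := ((hright (a * b)).tendsto 1).comp h2
      simpa [Function.comp_def] using h3
    refine key.congr fun p => ?_
    show p.1 * (a * p.2 * a⁻¹) * (a * b) = p.1 * a * (p.2 * b)
    simp [mul_assoc]
  have contInv : ContinuousInv G := by
    constructor
    rw [continuous_iff_continuousAt]
    intro x
    unfold ContinuousAt
    rw [chart_nhds_eq hright x, Filter.tendsto_map'_iff]
    have := (hleft x⁻¹).comp hinv
    refine Tendsto.congr (fun v => ?_) this
    show x⁻¹ * v⁻¹ = ((fun g : G => g⁻¹) ∘ fun g : G => g * x) v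
    simp [mul_inv_rev]
  exact { toContinuousMul := contMul, toContinuousInv := contInv }
end

section
/- (Milnes) Let G be a compact Hausdorff admissible right topological (CHART) group such that the topological center Λ(G), with the subspace topology, is a topological group (multiplication on Λ(G) is jointly continuous and inversion on Λ(G) is continuous). Then G is a topological group. -/
/-- The topological center of a right topological group: the set of elements `g`
for which the left translation `h ↦ g * h` is continuous. -/
def topCenter (G : Type*) [Group G] [TopologicalSpace G] : Set G :=
  {g : G | Continuous fun h : G => g * h}

open Filter Topology Set

section MilnesAux

variable {G : Type*} [Group G] [TopologicalSpace G]

theorem Milnes.one_mem_tc : (1 : G) ∈ topCenter G := by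
  show Continuous fun h : G => 1 * h
  simpa using continuous_id'

theorem Milnes.mul_mem_tc {a b : G} (ha : a ∈ topCenter G) (hb : b ∈ topCenter G) :
    a * b ∈ topCenter G := by
  show Continuous fun h : G => a * b * h
  have h : (fun h : G => a * b * h) = (fun h : G => a * h) ∘ fun h : G => b * h := by
    funext h; simp [mul_assoc]
  rw [h]; exact ha.comp hb

/-- Right translation as a homeomorphism. -/
def Milnes.rT (hright : ∀ h : G, Continuous fun g : G => g * h) (h : G) : G ≃ₜ G where
  toEquiv :=
    { toFun := fun g => g * h
      invFun := fun g => g * h⁻¹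
      left_inv := fun g => by simp
      right_inv := fun g => by simp }
  continuous_toFun := hright h
  continuous_invFun := hright h⁻¹

variable [CompactSpace G] [T2Space G]

/-- Left translation by a member of the topological center, as a homeomorphism. -/
noncomputable def Milnes.lT {l : G} (hl : l ∈ topCenter G) : G ≃ₜ G :=
  Continuous.homeoOfEquivCompactToT2
    (f := { toFun := fun x => l * x
            invFun := fun x => l⁻¹ * x
            left_inv := fun x => by simp
            right_inv := fun x => by simp }) hl

theorem Milnes.eq_of_mem_closure_nhds {x z : G} (h : ∀ W ∈ 𝓝 x, z ∈ closure W) : z = x := by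
  have hc : ClusterPt z (𝓝 x) := by
    rw [clusterPt_iff_nonempty]
    intro U hU W hW
    exact mem_closure_iff_nhds.mp (h W hW) U hU
  exact eq_of_nhds_neBot hc

theorem Milnes.tendsto_of_mapClusterPt {X : Type*} {f : X → G} {l : Filter X} {y : G}
    (h : ∀ z, MapClusterPt z l f → z = y) : Tendsto f l (𝓝 y) := by
  by_contra hc
  obtain ⟨U, hU, hUn⟩ : ∃ U ∈ 𝓝 y, f ⁻¹' U ∉ l := by
    by_contra h'
    push_neg at h'
    exact hc fun U hU => h' U hU
  have hne : NeBot (l ⊓ 𝓟 (f ⁻¹' Uᶜ)) := by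
    rw [inf_principal_neBot_iff]
    intro V hV
    rcases Set.not_subset.mp (fun hsub => hUn (mem_of_superset hV hsub)) with ⟨a, haV, haU⟩
    exact ⟨a, haV, haU⟩
  have hmapne : NeBot (map f (l ⊓ 𝓟 (f ⁻¹' Uᶜ))) := Filter.map_neBot
  obtain ⟨z, hz⟩ := exists_clusterPt_of_compactSpace (map f (l ⊓ 𝓟 (f ⁻¹' Uᶜ)))
  have hzy : z = y := h z (hz.mono (map_mono inf_le_left))
  have hzUc : z ∈ closure Uᶜ := by
    have h1 : map f (l ⊓ 𝓟 (f ⁻¹' Uᶜ)) ≤ 𝓟 Uᶜ := by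
      calc map f (l ⊓ 𝓟 (f ⁻¹' Uᶜ)) ≤ map f (𝓟 (f ⁻¹' Uᶜ)) := map_mono inf_le_right
      _ = 𝓟 (f '' (f ⁻¹' Uᶜ)) := map_principal
      _ ≤ 𝓟 Uᶜ := principal_mono.mpr (Set.image_preimage_subset f Uᶜ)
    exact mem_closure_iff_clusterPt.mpr (hz.mono h1)
  rw [hzy, closure_compl] at hzUc
  exact hzUc (mem_interior_iff_mem_nhds.mpr hU)

theorem Milnes.exists_nhds_box {F : ↥(topCenter G) × ↥(topCenter G) → G} (hF : Continuous F)
    (h1 : F (⟨1, Milnes.one_mem_tc⟩, ⟨1, Milnes.one_mem_tc⟩) = 1) {W : Set G}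
    (hW : W ∈ 𝓝 (1 : G)) :
    ∃ N : Set G, IsOpen N ∧ (1 : G) ∈ N ∧
      ∀ a b : ↥(topCenter G), (a : G) ∈ N → (b : G) ∈ N → F (a, b) ∈ W := by
  have hc : ContinuousAt F (⟨1, Milnes.one_mem_tc⟩, ⟨1, Milnes.one_mem_tc⟩) := hF.continuousAt
  have hW' : F ⁻¹' W ∈ 𝓝 ((⟨1, Milnes.one_mem_tc⟩, ⟨1, Milnes.one_mem_tc⟩) :
      ↥(topCenter G) × ↥(topCenter G)) := hc (by rw [h1]; exact hW)
  rw [mem_nhds_prod_iff] at hW'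
  obtain ⟨U, hU, V, hV, hUV⟩ := hW'
  rw [nhds_subtype_eq_comap, mem_comap] at hU hV
  obtain ⟨N₁, hN₁, hN₁s⟩ := hU
  obtain ⟨N₂, hN₂, hN₂s⟩ := hV
  refine ⟨interior (N₁ ∩ N₂), isOpen_interior, ?_, ?_⟩
  · rw [mem_interior_iff_mem_nhds]; exact inter_mem hN₁ hN₂
  · intro a b ha hb
    have ha' : (a : G) ∈ N₁ ∩ N₂ := interior_subset ha
    have hb' : (b : G) ∈ N₁ ∩ N₂ := interior_subset hb
    exact hUV ⟨hN₁s ha'.1, hN₂s hb'.2⟩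

theorem Milnes.mapClusterPt_mem_closure {X : Type*} {f : X → G} {l : Filter X} {z : G}
    (h : MapClusterPt z l f) {s : Set X} (hs : s ∈ l) : z ∈ closure (f '' s) := by
  have h1 : f '' s ∈ map f l := mem_map.mpr (mem_of_superset hs (Set.subset_preimage_image f s))
  exact mem_closure_iff_clusterPt.mpr (ClusterPt.mono h (le_principal_iff.mpr h1))

/-- key density fact: for open `N` and `l` in the center, `l*x ∈ closure (l '' (N ∩ Λ))`. -/
theorem Milnes.CL2 (hadm : Dense (topCenter G)) {l : G} (hl : l ∈ topCenter G)
    {N : Set G} (hN : IsOpen N) {x : G} (hx : x ∈ N) :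
    l * x ∈ closure ((fun y => l * y) '' (N ∩ topCenter G)) := by
  have h1 : x ∈ closure (N ∩ topCenter G) := hadm.open_subset_closure_inter hN hx
  have h2 : l * x ∈ (Milnes.lT hl) '' closure (N ∩ topCenter G) := ⟨x, h1, rfl⟩
  rwa [(Milnes.lT hl).image_closure] at h2

/-- key density fact on the other side. -/
theorem Milnes.CL1 (hright : ∀ h : G, Continuous fun g : G => g * h)
    (hadm : Dense (topCenter G)) {A : Set G} (hA : IsOpen A) {a : G} (ha : a ∈ A) (n : G) :
    a * n ∈ closure ((fun y => y * n) '' (A ∩ topCenter G)) := by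
  have h1 : a ∈ closure (A ∩ topCenter G) := hadm.open_subset_closure_inter hA ha
  have h2 : a * n ∈ (Milnes.rT hright n) '' closure (A ∩ topCenter G) := ⟨a, h1, rfl⟩
  rwa [(Milnes.rT hright n).image_closure] at h2

section Main

variable (hright : ∀ h : G, Continuous fun g : G => g * h)
variable (hadm : Dense (topCenter G))
variable (hinv_mem : ∀ g ∈ topCenter G, g⁻¹ ∈ topCenter G)
variable (hmul : Continuous fun p : ↥(topCenter G) × ↥(topCenter G) => (p.1 : G) * (p.2 : G))
variable (hinv : Continuous fun g : ↥(topCenter G) => (g : G)⁻¹)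

set_option linter.unusedSectionVars false

include hright hadm hinv_mem hmul hinv

/-- Lemma A at the identity: `(λ, x) ↦ λ * x` tends to `1` as `(λ,x) → (1,1)`. -/
theorem Milnes.lemmaA0 :
    Tendsto (fun p : ↥(topCenter G) × G => (p.1 : G) * p.2)
      (𝓝 (⟨1, Milnes.one_mem_tc⟩ : ↥(topCenter G)) ×ˢ 𝓝 (1 : G)) (𝓝 (1 : G)) := by
  apply Milnes.tendsto_of_mapClusterPt
  intro z hz
  apply Milnes.eq_of_mem_closure_nhds
  intro W hW
  obtain ⟨N, hNo, hN1, hNW⟩ := Milnes.exists_nhds_box hmul (by simp) hW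
  have hset : ((Subtype.val ⁻¹' N) ×ˢ N : Set (↥(topCenter G) × G)) ∈
      𝓝 (⟨1, Milnes.one_mem_tc⟩ : ↥(topCenter G)) ×ˢ 𝓝 (1 : G) := by
    apply prod_mem_prod
    · rw [nhds_subtype_eq_comap]; exact preimage_mem_comap (hNo.mem_nhds hN1)
    · exact hNo.mem_nhds hN1
  have hcl := Milnes.mapClusterPt_mem_closure hz hset
  refine closure_minimal ?_ isClosed_closure hcl
  rintro w ⟨⟨a, x⟩, ⟨haN, hxN⟩, rfl⟩
  have h2 : (a : G) * x ∈ closure ((fun y => (a : G) * y) '' (N ∩ topCenter G)) :=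
    Milnes.CL2 hadm a.2 hNo hxN
  refine closure_minimal ?_ isClosed_closure h2
  rintro w' ⟨m, hm, rfl⟩
  exact subset_closure (hNW a ⟨m, hm.2⟩ haN hm.1)

/-- Lemma A: `(λ, x) ↦ λ * x` is continuous at `(1, w)` for every `w`. -/
theorem Milnes.lemmaA (w : G) :
    Tendsto (fun p : ↥(topCenter G) × G => (p.1 : G) * p.2)
      (𝓝 (⟨1, Milnes.one_mem_tc⟩ : ↥(topCenter G)) ×ˢ 𝓝 w) (𝓝 w) := by
  have hT : Tendsto (fun p : ↥(topCenter G) × G => (p.1, p.2 * w⁻¹))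
      (𝓝 (⟨1, Milnes.one_mem_tc⟩ : ↥(topCenter G)) ×ˢ 𝓝 w)
      (𝓝 (⟨1, Milnes.one_mem_tc⟩ : ↥(topCenter G)) ×ˢ 𝓝 (1 : G)) := by
    apply Tendsto.prodMk tendsto_fst
    have := ((hright w⁻¹).tendsto w).comp (tendsto_snd
      (f := 𝓝 (⟨1, Milnes.one_mem_tc⟩ : ↥(topCenter G))) (g := 𝓝 w))
    simpa [Function.comp_def] using this
  have h0 := (Milnes.lemmaA0 hright hadm hinv_mem hmul hinv).comp hT
  have h1 := ((hright w).tendsto 1).comp h0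
  simp only [Function.comp_def] at h1
  rw [one_mul] at h1
  refine h1.congr fun p => ?_
  simp [mul_assoc]

/-- CLAIM-INV : if a net in the center converges to `g` in `G`, the inverses converge
to `g⁻¹`. -/
theorem Milnes.lemmaB (g : G) :
    Tendsto (fun l : ↥(topCenter G) => (l : G)⁻¹)
      (comap (Subtype.val : ↥(topCenter G) → G) (𝓝 g)) (𝓝 g⁻¹) := by
  apply Milnes.tendsto_of_mapClusterPt
  intro q hq
  -- we show q * g = 1
  have key : q * g = 1 := by
    apply Milnes.eq_of_mem_closure_nhds
    intro W hW
    -- continuity of (a,b) ↦ a⁻¹ * b on Λ × Λ at (1,1)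
    have hFcont : Continuous fun p : ↥(topCenter G) × ↥(topCenter G) =>
        ((p.1 : G))⁻¹ * (p.2 : G) := by
      have hiΛ : Continuous fun a : ↥(topCenter G) =>
          (⟨(a : G)⁻¹, hinv_mem _ a.2⟩ : ↥(topCenter G)) := hinv.subtype_mk _
      exact hmul.comp ((hiΛ.comp continuous_fst).prodMk continuous_snd)
    obtain ⟨N, hNo, hN1, hNW⟩ := Milnes.exists_nhds_box hFcont (by simp) hW
    -- pick λ₀ in the center with λ₀ * g ∈ N
    have hN₁o : IsOpen ((fun x => x * g) ⁻¹' N) := (hright g).isOpen_preimage N hNo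
    have hN₁ne : ((fun x => x * g) ⁻¹' N).Nonempty := ⟨g⁻¹, by simpa using hN1⟩
    obtain ⟨l₀, hl₀Λ, hl₀⟩ := hadm.exists_mem_open hN₁o hN₁ne
    -- A := preimage of N under left translation by λ₀ : open neighborhood of g
    set A : Set G := (fun x => l₀ * x) ⁻¹' N with hA
    have hAo : IsOpen A := (hl₀Λ : Continuous fun x : G => l₀ * x).isOpen_preimage N hNo
    have hgA : g ∈ A := by simpa [hA] using hl₀
    -- q ∈ closure of the inverses of A ∩ Λ
    have hAmem : (Subtype.val ⁻¹' A : Set ↥(topCenter G)) ∈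
        comap (Subtype.val : ↥(topCenter G) → G) (𝓝 g) :=
      preimage_mem_comap (hAo.mem_nhds hgA)
    have hqcl := Milnes.mapClusterPt_mem_closure hq hAmem
    -- multiply by g on the right
    have hqg : q * g ∈ closure ((fun y => y * g) ''
        ((fun l : ↥(topCenter G) => (l : G)⁻¹) '' (Subtype.val ⁻¹' A))) := by
      have h2 : q * g ∈ (Milnes.rT hright g) ''
          closure ((fun l : ↥(topCenter G) => (l : G)⁻¹) '' (Subtype.val ⁻¹' A)) :=
        ⟨q, hqcl, rfl⟩
      rwa [(Milnes.rT hright g).image_closure] at h2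
    refine closure_minimal ?_ isClosed_closure hqg
    rintro w ⟨w', ⟨a, haA, rfl⟩, rfl⟩
    -- now show (↑a)⁻¹ * g ∈ closure W
    have hainv : ((a : G))⁻¹ ∈ topCenter G := hinv_mem _ a.2
    have h3 : ((a : G))⁻¹ * g ∈ closure ((fun y => ((a : G))⁻¹ * y) '' (A ∩ topCenter G)) :=
      Milnes.CL2 hadm hainv hAo hgA
    refine closure_minimal ?_ isClosed_closure h3
    rintro w'' ⟨m, hm, rfl⟩
    -- (↑a)⁻¹ * m ∈ W since (λ₀ a)⁻¹ (λ₀ m) ∈ W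
    have hprod : ((⟨l₀ * (a : G), Milnes.mul_mem_tc hl₀Λ a.2⟩ : ↥(topCenter G)) : G) ∈ N :=
      haA
    have hprod2 : ((⟨l₀ * m, Milnes.mul_mem_tc hl₀Λ hm.2⟩ : ↥(topCenter G)) : G) ∈ N := hm.1
    have := hNW _ _ hprod hprod2
    simp only at this
    apply subset_closure
    convert this using 1
    simp [mul_assoc, mul_inv_rev]
  exact eq_inv_of_mul_eq_one_left key

/-- Multiplication on `G` is continuous at `(g, 1)`. -/
theorem Milnes.lemmaC (g : G) :
    Tendsto (fun p : G × G => p.1 * p.2) (𝓝 g ×ˢ 𝓝 (1 : G)) (𝓝 g) := by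
  apply Milnes.tendsto_of_mapClusterPt
  intro z hz
  -- the filter ℱ on Λ × Λ
  set Φ : ↥(topCenter G) × ↥(topCenter G) → G × G × G :=
    fun p => ((p.1 : G), (p.2 : G), (p.1 : G) * (p.2 : G)) with hΦ
  set ℱ : Filter (↥(topCenter G) × ↥(topCenter G)) :=
    comap Φ (𝓝 g ×ˢ (𝓝 (1 : G) ×ˢ 𝓝 z)) with hℱ
  -- z is in the closure of (A∩Λ)(N∩Λ) for all open A ∋ g, N ∋ 1
  have hzcl : ∀ A ∈ 𝓝 g, ∀ N ∈ 𝓝 (1 : G),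
      z ∈ closure (image2 (fun a b : G => a * b)
        (interior A ∩ topCenter G) (interior N ∩ topCenter G)) := by
    intro A hA N hN
    have hA' : IsOpen (interior A) := isOpen_interior
    have hN' : IsOpen (interior N) := isOpen_interior
    have hset : (interior A ×ˢ interior N : Set (G × G)) ∈ 𝓝 g ×ˢ 𝓝 (1 : G) :=
      prod_mem_prod (hA'.mem_nhds (mem_interior_iff_mem_nhds.mpr hA))
        (hN'.mem_nhds (mem_interior_iff_mem_nhds.mpr hN))
    have h0 := Milnes.mapClusterPt_mem_closure hz hset
    rw [Set.image_prod] at h0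
    -- step 1 : replace interior A by interior A ∩ Λ
    have hstep1 : image2 (fun a b : G => a * b) (interior A) (interior N) ⊆
        closure (image2 (fun a b : G => a * b) (interior A ∩ topCenter G) (interior N)) := by
      rintro w ⟨a, ha, n, hn, rfl⟩
      have := Milnes.CL1 hright hadm hA' ha n
      refine closure_mono ?_ this
      rintro w' ⟨m, hm, rfl⟩
      exact ⟨m, hm, n, hn, rfl⟩
    -- step 2 : replace interior N by interior N ∩ Λ
    have hstep2 : image2 (fun a b : G => a * b) (interior A ∩ topCenter G) (interior N) ⊆
        closure (image2 (fun a b : G => a * b)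
          (interior A ∩ topCenter G) (interior N ∩ topCenter G)) := by
      rintro w ⟨m, hm, n, hn, rfl⟩
      have := Milnes.CL2 hadm hm.2 hN' hn
      refine closure_mono ?_ this
      rintro w' ⟨m', hm', rfl⟩
      exact ⟨m, hm, m', hm', rfl⟩
    have h1 : z ∈ closure (image2 (fun a b : G => a * b)
        (interior A ∩ topCenter G) (interior N)) := by
      have := closure_mono hstep1 h0
      rwa [closure_closure] at this
    have h2 := closure_mono hstep2 h1
    rwa [closure_closure] at h2
  have hne : NeBot ℱ := by
    rw [hℱ, comap_neBot_iff]
    intro t ht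
    rw [Filter.mem_prod_iff] at ht
    obtain ⟨A, hA, u, hu, hsub⟩ := ht
    rw [Filter.mem_prod_iff] at hu
    obtain ⟨N, hN, V, hV, hsub2⟩ := hu
    have hzin := hzcl A hA N hN
    obtain ⟨v, hvV, hvim⟩ := mem_closure_iff_nhds.mp hzin V hV
    obtain ⟨m₁, hm₁, m₂, hm₂, hveq⟩ := hvim
    refine ⟨(⟨m₁, hm₁.2⟩, ⟨m₂, hm₂.2⟩), hsub ?_⟩
    refine ⟨interior_subset hm₁.1, hsub2 ⟨interior_subset hm₂.1, ?_⟩⟩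
    have hveq' : m₁ * m₂ = v := hveq
    show m₁ * m₂ ∈ V
    rw [hveq']
    exact hvV
  -- projections along ℱ
  have hΦt : Tendsto Φ ℱ (𝓝 g ×ˢ (𝓝 (1 : G) ×ˢ 𝓝 z)) := tendsto_comap
  have hfst : Tendsto (fun p : ↥(topCenter G) × ↥(topCenter G) => (p.1 : G)) ℱ (𝓝 g) :=
    tendsto_fst.comp hΦt
  have hsnd : Tendsto (fun p : ↥(topCenter G) × ↥(topCenter G) => (p.2 : G)) ℱ (𝓝 (1 : G)) :=
    (tendsto_fst.comp tendsto_snd).comp hΦt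
  have hmulz : Tendsto (fun p : ↥(topCenter G) × ↥(topCenter G) => (p.1 : G) * (p.2 : G)) ℱ
      (𝓝 z) := (tendsto_snd.comp tendsto_snd).comp hΦt
  -- first limit : (↑p.2)⁻¹ * (↑p.1)⁻¹ → g⁻¹
  have hB1 : Tendsto (fun p : ↥(topCenter G) × ↥(topCenter G) => ((p.1 : G))⁻¹) ℱ (𝓝 g⁻¹) :=
    (Milnes.lemmaB hright hadm hinv_mem hmul hinv g).comp (tendsto_comap_iff.mpr hfst)
  have hB2 : Tendsto (fun p : ↥(topCenter G) × ↥(topCenter G) => p.2) ℱ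
      (𝓝 (⟨1, Milnes.one_mem_tc⟩ : ↥(topCenter G))) := by
    rw [nhds_subtype_eq_comap]
    exact tendsto_comap_iff.mpr hsnd
  have hiΛ : Continuous fun a : ↥(topCenter G) =>
      (⟨(a : G)⁻¹, hinv_mem _ a.2⟩ : ↥(topCenter G)) := hinv.subtype_mk _
  have hB2' : Tendsto (fun p : ↥(topCenter G) × ↥(topCenter G) =>
      (⟨((p.2 : G))⁻¹, hinv_mem _ p.2.2⟩ : ↥(topCenter G))) ℱ
      (𝓝 (⟨1, Milnes.one_mem_tc⟩ : ↥(topCenter G))) := by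
    have := (hiΛ.tendsto (⟨1, Milnes.one_mem_tc⟩ : ↥(topCenter G))).comp hB2
    simp only [Function.comp_def] at this
    convert this using 2
    simp
  have hlim1 : Tendsto (fun p : ↥(topCenter G) × ↥(topCenter G) =>
      ((p.2 : G))⁻¹ * ((p.1 : G))⁻¹) ℱ (𝓝 g⁻¹) := by
    have hpair := hB2'.prodMk hB1
    have := (Milnes.lemmaA hright hadm hinv_mem hmul hinv g⁻¹).comp hpair
    simpa [Function.comp_def] using this
  -- second limit : the same function tends to z⁻¹
  have hlim2 : Tendsto (fun p : ↥(topCenter G) × ↥(topCenter G) =>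
      ((p.2 : G))⁻¹ * ((p.1 : G))⁻¹) ℱ (𝓝 z⁻¹) := by
    have hmulΛ : Tendsto (fun p : ↥(topCenter G) × ↥(topCenter G) =>
        (⟨(p.1 : G) * (p.2 : G), Milnes.mul_mem_tc p.1.2 p.2.2⟩ : ↥(topCenter G))) ℱ
        (comap (Subtype.val : ↥(topCenter G) → G) (𝓝 z)) :=
      tendsto_comap_iff.mpr hmulz
    have := (Milnes.lemmaB hright hadm hinv_mem hmul hinv z).comp hmulΛ
    simp only [Function.comp_def] at this
    refine this.congr fun p => ?_
    simp [mul_inv_rev]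
  have hzg : z⁻¹ = g⁻¹ := tendsto_nhds_unique hlim2 hlim1
  exact inv_injective hzg

end Main

end MilnesAux

/-- (Milnes) Let `G` be a CHART group (compact Hausdorff admissible right
topological group) such that the topological center `Λ(G)`, with the subspace
topology, is a topological group (it is closed under inversion, multiplication
on it is jointly continuous and inversion on it is continuous). Then `G` is a
topological group. -/
theorem topologicalGroup_of_chart_center_topologicalGroup {G : Type*} [Group G]
    [TopologicalSpace G] [CompactSpace G] [T2Space G]
    (hright : ∀ h : G, Continuous fun g : G => g * h)
    (hadm : Dense (topCenter G))
    (hinv_mem : ∀ g ∈ topCenter G, g⁻¹ ∈ topCenter G)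
    (hmul : Continuous fun p : ↥(topCenter G) × ↥(topCenter G) => (p.1 : G) * (p.2 : G))
    (hinv : Continuous fun g : ↥(topCenter G) => (g : G)⁻¹) :
    IsTopologicalGroup G := by
  have contMul : Continuous fun p : G × G => p.1 * p.2 := by
    rw [continuous_iff_continuousAt]
    rintro ⟨g, h⟩
    have hT : Tendsto (fun p : G × G => (p.1, p.2 * h⁻¹)) (𝓝 g ×ˢ 𝓝 h)
        (𝓝 g ×ˢ 𝓝 (1 : G)) := by
      apply Tendsto.prodMk tendsto_fst
      have := ((hright h⁻¹).tendsto h).comp (tendsto_snd (f := 𝓝 g) (g := 𝓝 h))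
      simpa [Function.comp_def] using this
    have h0 := (Milnes.lemmaC hright hadm hinv_mem hmul hinv g).comp hT
    have h1 := ((hright h).tendsto g).comp h0
    simp only [Function.comp_def] at h1
    have h2 : Tendsto (fun p : G × G => p.1 * p.2) (𝓝 g ×ˢ 𝓝 h) (𝓝 (g * h)) := by
      refine h1.congr fun p => ?_
      simp [mul_assoc]
    unfold ContinuousAt
    rw [nhds_prod_eq]
    exact h2
  have contInv : Continuous fun x : G => x⁻¹ := by
    rw [continuous_iff_continuousAt]
    intro x
    unfold ContinuousAt
    apply Milnes.tendsto_of_mapClusterPt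
    intro z hz
    set 𝒢 : Filter G := 𝓝 x ⊓ comap (fun y : G => y⁻¹) (𝓝 z) with h𝒢
    have hne : NeBot 𝒢 := by
      rw [h𝒢, Filter.inf_neBot_iff]
      intro U hU V hV
      rw [mem_comap] at hV
      obtain ⟨V', hV', hV's⟩ := hV
      have h1 : (fun y : G => y⁻¹) ⁻¹' U ∈ map (fun y : G => y⁻¹) (𝓝 x) := by
        rw [mem_map]
        have : (fun y : G => y⁻¹) ⁻¹' ((fun y : G => y⁻¹) ⁻¹' U) = U := by
          ext y; simp
        rw [this]; exact hU
      obtain ⟨y, hyV', hyU⟩ := Filter.inf_neBot_iff.mp hz hV' h1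
      exact ⟨y⁻¹, hyU, hV's (by simpa using hyV')⟩
    have hid : Tendsto (fun y : G => y) 𝒢 (𝓝 x) := tendsto_inf_left tendsto_id
    have hinv2 : Tendsto (fun y : G => y⁻¹) 𝒢 (𝓝 z) := tendsto_comap.mono_left inf_le_right
    have hpair : Tendsto (fun y : G => (y, y⁻¹)) 𝒢 (𝓝 x ×ˢ 𝓝 z) := hid.prodMk hinv2
    have hmxz : Tendsto (fun p : G × G => p.1 * p.2) (𝓝 x ×ˢ 𝓝 z) (𝓝 (x * z)) := by
      have := contMul.continuousAt (x := (x, z))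
      unfold ContinuousAt at this
      rwa [nhds_prod_eq] at this
    have h1 : Tendsto (fun y : G => y * y⁻¹) 𝒢 (𝓝 (x * z)) := hmxz.comp hpair
    have h2 : Tendsto (fun _ : G => (1 : G)) 𝒢 (𝓝 (x * z)) := by
      refine h1.congr fun y => ?_
      simp
    have h3 : x * z = 1 := tendsto_nhds_unique h2 tendsto_const_nhds
    exact eq_inv_of_mul_eq_one_right h3
  exact { continuous_mul := contMul, continuous_inv := contInv }
end

section
/- (Ellis) Every locally compact Hausdorff semitopological group is a topological group (i.e. multiplication is jointly continuous and inversion is continuous). -/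
open Set Filter Topology OnePoint

section Namioka

variable {X Y : Type*} [TopologicalSpace X] [TopologicalSpace Y]

/-- Auxiliary: `(a, b)` is an `ε`-bad point of `f` if every open box around it contains two
points whose `f`-values differ by more than `ε`. -/
def NamBad (f : X → Y → ℝ) (ε : ℝ) (a : X) (b : Y) : Prop :=
  ∀ A V : Set _, IsOpen A → IsOpen V → a ∈ A → b ∈ V →
    ∃ x₁ ∈ A, ∃ y₁ ∈ V, ∃ x₂ ∈ A, ∃ y₂ ∈ V, ε < |f x₁ y₁ - f x₂ y₂|

theorem isClosed_namBad (f : X → Y → ℝ) (ε : ℝ) :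
    IsClosed {z : X × Y | NamBad f ε z.1 z.2} := by
  rw [← isOpen_compl_iff, isOpen_iff_forall_mem_open]
  rintro ⟨a, b⟩ hz
  simp only [mem_compl_iff, mem_setOf_eq, NamBad] at hz
  push_neg at hz
  obtain ⟨A, V, hAo, hVo, haA, hbV, hsmall⟩ := hz
  refine ⟨A ×ˢ V, ?_, hAo.prod hVo, mk_mem_prod haA hbV⟩
  rintro ⟨a', b'⟩ ⟨ha', hb'⟩ hbad
  obtain ⟨x₁, hx₁, y₁, hy₁, x₂, hx₂, y₂, hy₂, hgt⟩ := hbad A V hAo hVo ha' hb'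
  have := hsmall x₁ hx₁ y₁ hy₁ x₂ hx₂ y₂ hy₂
  linarith

variable [LocallyCompactSpace X] [T2Space X] [CompactSpace Y]

/-- Namioka-type joint continuity lemma (single ε, full fiber). -/
theorem namioka_single (f : X → Y → ℝ) (hfx : ∀ y, Continuous fun x => f x y)
    (hfy : ∀ x, Continuous (f x)) (hbd : ∀ x y, f x y ∈ Icc (0:ℝ) 1)
    {U₀ : Set X} (hU₀ : IsOpen U₀) (hne : U₀.Nonempty) {ε : ℝ} (hε : 0 < ε) :
    ∃ a ∈ U₀, ∀ y : Y, ∃ A V, IsOpen A ∧ IsOpen V ∧ a ∈ A ∧ y ∈ V ∧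
      ∀ x₁ ∈ A, ∀ y₁ ∈ V, ∀ x₂ ∈ A, ∀ y₂ ∈ V, |f x₁ y₁ - f x₂ y₂| ≤ ε := by
  by_contra hcon
  push_neg at hcon
  have hbad₀ : ∀ a ∈ U₀, ∃ y : Y, NamBad f ε a y := by
    intro a ha
    obtain ⟨y, hy⟩ := hcon a ha
    exact ⟨y, fun A V hAo hVo haA hyV => hy A V hAo hVo haA hyV⟩
  clear hcon
  obtain ⟨x₀, hx₀⟩ := hne
  obtain ⟨K, hKc, hx₀K, hKU₀⟩ := exists_compact_subset hU₀ hx₀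
  set U₁ : Set X := interior K with hU₁def
  have hU₁o : IsOpen U₁ := isOpen_interior
  set Q : Set X := closure U₁ with hQdef
  have hQK : Q ⊆ K := closure_minimal interior_subset hKc.isClosed
  have hQc : IsCompact Q := hKc.of_isClosed_subset isClosed_closure hQK
  have hQU₀ : Q ⊆ U₀ := hQK.trans hKU₀
  have hU₁Q : U₁ ⊆ Q := subset_closure
  -- the full bad set over Q
  set S₀ : Set (X × Y) := {z | z.1 ∈ Q ∧ NamBad f ε z.1 z.2} with hS₀def
  have hS₀closed : IsClosed S₀ := by
    have h1 : IsClosed {z : X × Y | z.1 ∈ Q} := isClosed_closure.preimage continuous_fst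
    exact h1.inter (isClosed_namBad f ε)
  have hS₀fib : ∀ x ∈ Q, ∃ y, (x, y) ∈ S₀ := by
    intro x hx
    obtain ⟨y, hy⟩ := hbad₀ x (hQU₀ hx)
    exact ⟨y, hx, hy⟩
  -- Zorn: a minimal closed subset of S₀ with full projection on Q
  set 𝒮 : Set (Set (X × Y)) := {T | T ⊆ S₀ ∧ IsClosed T ∧ ∀ x ∈ Q, ∃ y, (x, y) ∈ T} with h𝒮def
  have hS₀mem : S₀ ∈ 𝒮 := ⟨Subset.rfl, hS₀closed, hS₀fib⟩
  obtain ⟨S', hS'S₀, hS'min⟩ : ∃ S', S' ⊆ S₀ ∧ Minimal (· ∈ 𝒮) S' := by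
    apply zorn_superset_nonempty 𝒮 ?_ S₀ hS₀mem
    intro c hc𝒮 hchain hcne
    refine ⟨⋂₀ c, ⟨?_, ?_, ?_⟩, fun s hs => sInter_subset_of_mem hs⟩
    · obtain ⟨T, hT⟩ := hcne
      exact (sInter_subset_of_mem hT).trans (hc𝒮 hT).1
    · exact isClosed_sInter fun T hT => (hc𝒮 hT).2.1
    · intro x hx
      have : Nonempty c := hcne.to_subtype
      have key : (⋂ T : c, {y : Y | (x, y) ∈ (T : Set (X × Y))}).Nonempty := by
        apply IsCompact.nonempty_iInter_of_directed_nonempty_isCompact_isClosed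
        · intro T₁ T₂
          rcases hchain.total T₁.2 T₂.2 with h | h
          · exact ⟨T₁, Subset.rfl, fun y hy => h hy⟩
          · exact ⟨T₂, fun y hy => h hy, Subset.rfl⟩
        · intro T
          obtain ⟨y, hy⟩ := (hc𝒮 T.2).2.2 x hx
          exact ⟨y, hy⟩
        · intro T
          exact (((hc𝒮 T.2).2.1.preimage (Continuous.prodMk_right x)) : IsClosed _).isCompact
        · intro T
          exact (hc𝒮 T.2).2.1.preimage (Continuous.prodMk_right x)
      obtain ⟨y, hy⟩ := key
      simp only [mem_iInter, mem_setOf_eq] at hy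
      exact ⟨y, by rw [mem_sInter]; exact fun T hT => hy ⟨T, hT⟩⟩
  have hS'mem : S' ∈ 𝒮 := hS'min.1
  have hS'closed : IsClosed S' := hS'mem.2.1
  have hS'fib : ∀ x ∈ Q, ∃ y, (x, y) ∈ S' := hS'mem.2.2
  have hS'sub : S' ⊆ S₀ := hS'mem.1
  -- minimality property
  have hMP : ∀ (U : Set X) (V : Set Y), IsOpen U → IsOpen V →
      ∀ p ∈ U, ∀ ty ∈ V, (p, ty) ∈ S' →
      ∃ O : Set X, IsOpen O ∧ O.Nonempty ∧ O ⊆ U ∧ O ⊆ U₁ ∧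
        ∀ x ∈ O, ∀ y, (x, y) ∈ S' → y ∈ V := by
    intro U V hUo hVo p hpU ty htyV hptyS'
    set T : Set (X × Y) := S' \ (U ×ˢ V) with hTdef
    have hTclosed : IsClosed T := hS'closed.sdiff (hUo.prod hVo)
    have hTne : T ≠ S' := by
      intro h
      have : (p, ty) ∈ T := h ▸ hptyS'
      exact this.2 (mk_mem_prod hpU htyV)
    have hTnot𝒮 : T ∉ 𝒮 := by
      intro hT
      exact hTne (le_antisymm diff_subset (hS'min.2 hT diff_subset))
    have : ∃ x ∈ Q, ∀ y, (x, y) ∉ T := by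
      by_contra hcc
      push_neg at hcc
      exact hTnot𝒮 ⟨diff_subset.trans hS'sub, hTclosed, hcc⟩
    obtain ⟨xs, hxsQ, hxs⟩ := this
    -- the set of x all of whose S'-fiber lies in V
    set O' : Set X := {x | ∀ y, (x, y) ∈ S' → y ∈ V} with hO'def
    have hxsO' : xs ∈ O' := by
      intro y hy
      have := hxs y
      simp only [hTdef, mem_diff, not_and, not_not] at this
      exact (this hy).2
    have hxsU : xs ∈ U := by
      obtain ⟨y, hy⟩ := hS'fib xs hxsQ
      have := hxs y
      simp only [hTdef, mem_diff, not_and, not_not] at this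
      exact (this hy).1
    have hO'open : IsOpen O' := by
      rw [isOpen_iff_forall_mem_open]
      intro x hx
      have hsub : ({x} ×ˢ (univ : Set Y)) ⊆ (S' ∩ (univ ×ˢ Vᶜ))ᶜ := by
        rintro ⟨x', y⟩ ⟨hx', _⟩
        simp only [mem_singleton_iff] at hx'
        subst hx'
        intro hmem
        exact hmem.2.2 (hx y hmem.1)
      obtain ⟨v, w, hvo, hwo, hxv, hww, hvw⟩ :=
        generalized_tube_lemma isCompact_singleton isCompact_univ
          ((hS'closed.inter (isClosed_univ.prod hVo.isClosed_compl)).isOpen_compl) hsub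
      refine ⟨v, ?_, hvo, hxv rfl⟩
      intro x' hx' y hy
      by_contra hyV
      exact hvw (mk_mem_prod hx' (hww (mem_univ y))) ⟨hy, mem_univ _, hyV⟩
    -- intersect with U and U₁
    refine ⟨O' ∩ U ∩ U₁, ((hO'open.inter hUo).inter hU₁o), ?_, fun x hx => hx.1.2,
      fun x hx => hx.2, fun x hx => hx.1.1⟩
    -- nonempty: xs ∈ closure U₁ and O' ∩ U is an open neighborhood of xs
    have : (O' ∩ U ∩ U₁).Nonempty := by
      have h1 : xs ∈ closure U₁ := hxsQ
      rw [mem_closure_iff] at h1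
      obtain ⟨z, hz⟩ := h1 (O' ∩ U) (hO'open.inter hUo) ⟨hxsO', hxsU⟩
      exact ⟨z, hz.1, hz.2⟩
    exact this
  -- quantitative setup
  have E20 : (0:ℝ) < ε/20 := by linarith
  -- one step of the recursion
  have hstep : ∀ (U : Set X) (V : Set Y), IsOpen U → U.Nonempty → U ⊆ U₁ → IsOpen V →
      (∀ x ∈ U, ∀ y, (x, y) ∈ S' → y ∈ V) →
      ∃ (U' : Set X) (V' : Set Y) (xx pp : X) (yy ty qq : Y),
        (IsOpen U' ∧ U'.Nonempty ∧ U' ⊆ U₁ ∧ IsOpen V' ∧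
          (∀ x ∈ U', ∀ y, (x, y) ∈ S' → y ∈ V')) ∧
        U' ⊆ U ∧ V' ⊆ V ∧
        xx ∈ U ∧ pp ∈ U ∧ yy ∈ V ∧ qq ∈ V ∧
        ε/2 < |f pp qq - f xx yy| ∧
        (∀ x ∈ U', |f x yy - f xx yy| < ε/20) ∧
        (∀ x ∈ U', |f x qq - f pp qq| < ε/20) ∧
        (∀ y ∈ V', |f pp y - f pp ty| < ε/20) := by
    intro U V hUo hUne hUU₁ hVo hinv
    obtain ⟨xx, hxxU⟩ := hUne
    obtain ⟨yy, hyyS⟩ := hS'fib xx (hU₁Q (hUU₁ hxxU))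
    have hyyV : yy ∈ V := hinv xx hxxU yy hyyS
    have hbadxy : NamBad f ε xx yy := (hS'sub hyyS).2
    set Wx : Set X := {x | |f x yy - f xx yy| < ε/20} with hWxdef
    have hWxo : IsOpen Wx :=
      isOpen_lt (((hfx yy).sub continuous_const).abs) continuous_const
    have hxxWx : xx ∈ Wx := by
      simp only [hWxdef, mem_setOf_eq, sub_self, abs_zero]; exact E20
    obtain ⟨x₁, hx₁, y₁, hy₁, x₂, hx₂, y₂, hy₂, hgt⟩ :=
      hbadxy (U ∩ Wx) V (hUo.inter hWxo) hVo ⟨hxxU, hxxWx⟩ hyyV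
    have hcase : ε/2 < |f x₁ y₁ - f xx yy| ∨ ε/2 < |f x₂ y₂ - f xx yy| := by
      by_contra hcc
      push_neg at hcc
      have h1 : |f x₁ y₁ - f x₂ y₂| ≤ |f x₁ y₁ - f xx yy| + |f xx yy - f x₂ y₂| :=
        abs_sub_le _ _ _
      have h2 : |f xx yy - f x₂ y₂| = |f x₂ y₂ - f xx yy| := abs_sub_comm _ _
      linarith [hcc.1, hcc.2]
    obtain ⟨pp, qq, hppUWx, hqqV, hgap⟩ :
        ∃ pp qq, pp ∈ U ∩ Wx ∧ qq ∈ V ∧ ε/2 < |f pp qq - f xx yy| := by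
      rcases hcase with h | h
      · exact ⟨x₁, y₁, hx₁, hy₁, h⟩
      · exact ⟨x₂, y₂, hx₂, hy₂, h⟩
    set Wp : Set X := {x | |f x qq - f pp qq| < ε/20} with hWpdef
    have hWpo : IsOpen Wp :=
      isOpen_lt (((hfx qq).sub continuous_const).abs) continuous_const
    have hppWp : pp ∈ Wp := by
      simp only [hWpdef, mem_setOf_eq, sub_self, abs_zero]; exact E20
    obtain ⟨ty, htyS⟩ := hS'fib pp (hU₁Q (hUU₁ hppUWx.1))
    have htyV : ty ∈ V := hinv pp hppUWx.1 ty htyS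
    set W' : Set Y := {y | |f pp y - f pp ty| < ε/20} with hW'def
    have hW'o : IsOpen W' :=
      isOpen_lt (((hfy pp).sub continuous_const).abs) continuous_const
    have htyW' : ty ∈ W' := by
      simp only [hW'def, mem_setOf_eq, sub_self, abs_zero]; exact E20
    obtain ⟨O, hOo, hOne, hOsub, hOU₁, hOfib⟩ :=
      hMP (U ∩ Wx ∩ Wp) (V ∩ W') ((hUo.inter hWxo).inter hWpo) (hVo.inter hW'o)
        pp ⟨hppUWx, hppWp⟩ ty ⟨htyV, htyW'⟩ htyS
    refine ⟨O, V ∩ W', xx, pp, yy, ty, qq,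
      ⟨hOo, hOne, hOU₁, hVo.inter hW'o, hOfib⟩,
      fun x hx => (hOsub hx).1.1, inter_subset_left,
      hxxU, hppUWx.1, hyyV, hqqV, hgap, ?_, ?_, ?_⟩
    · intro x hx
      exact (hOsub hx).1.2
    · intro x hx
      exact (hOsub hx).2
    · intro y hy
      exact hy.2
  -- package as states and iterate
  classical
  let StP : Set X × Set Y → Prop := fun s =>
    IsOpen s.1 ∧ s.1.Nonempty ∧ s.1 ⊆ U₁ ∧ IsOpen s.2 ∧
      ∀ x ∈ s.1, ∀ y, (x, y) ∈ S' → y ∈ s.2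
  have hstep' : ∀ s : {s : Set X × Set Y // StP s}, ∃ t : {s : Set X × Set Y // StP s},
      (t.1.1 ⊆ s.1.1 ∧ t.1.2 ⊆ s.1.2) ∧
      ∃ xx pp yy ty qq, xx ∈ s.1.1 ∧ pp ∈ s.1.1 ∧ yy ∈ s.1.2 ∧ qq ∈ s.1.2 ∧
        ε/2 < |f pp qq - f xx yy| ∧
        (∀ x ∈ t.1.1, |f x yy - f xx yy| < ε/20) ∧
        (∀ x ∈ t.1.1, |f x qq - f pp qq| < ε/20) ∧
        (∀ y ∈ t.1.2, |f pp y - f pp ty| < ε/20) := by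
    rintro ⟨⟨U, V⟩, hP⟩
    obtain ⟨U', V', xx, pp, yy, ty, qq, hP', hU'U, hV'V, hxxU, hppU, hyyV, hqqV,
      hgap, hflat1, hflat2, hwin⟩ := hstep U V hP.1 hP.2.1 hP.2.2.1 hP.2.2.2.1 hP.2.2.2.2
    exact ⟨⟨(U', V'), hP'⟩, ⟨hU'U, hV'V⟩,
      xx, pp, yy, ty, qq, hxxU, hppU, hyyV, hqqV, hgap, hflat1, hflat2, hwin⟩
  choose next hsub hdata using hstep'
  let s0 : {s : Set X × Set Y // StP s} :=
    ⟨(U₁, univ), hU₁o, ⟨x₀, hx₀K⟩, Subset.rfl, isOpen_univ, fun _ _ _ _ => mem_univ _⟩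
  let seq : ℕ → {s : Set X × Set Y // StP s} := fun n => Nat.rec s0 (fun _ s => next s) n
  have hseq_succ : ∀ n, seq (n + 1) = next (seq n) := fun n => rfl
  -- extract the per-stage data
  have hdata' : ∀ n : ℕ, ∃ xx pp yy ty qq,
      xx ∈ (seq n).1.1 ∧ pp ∈ (seq n).1.1 ∧ yy ∈ (seq n).1.2 ∧ qq ∈ (seq n).1.2 ∧
      ε/2 < |f pp qq - f xx yy| ∧
      (∀ x ∈ (seq (n+1)).1.1, |f x yy - f xx yy| < ε/20) ∧
      (∀ x ∈ (seq (n+1)).1.1, |f x qq - f pp qq| < ε/20) ∧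
      (∀ y ∈ (seq (n+1)).1.2, |f pp y - f pp ty| < ε/20) := by
    intro n
    rw [hseq_succ n]
    exact hdata (seq n)
  choose xs ps ys ts qs hxmem hpmem hymem hqmem hgap hflat1 hflat2 hwin using hdata'
  have hsubU : ∀ n, (seq (n+1)).1.1 ⊆ (seq n).1.1 := by
    intro n; rw [hseq_succ n]; exact (hsub (seq n)).1
  have hsubV : ∀ n, (seq (n+1)).1.2 ⊆ (seq n).1.2 := by
    intro n; rw [hseq_succ n]; exact (hsub (seq n)).2
  have hchainU : ∀ k m, k ≤ m → (seq m).1.1 ⊆ (seq k).1.1 := by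
    intro k m hkm
    induction m with
    | zero => rw [Nat.le_zero.mp hkm]
    | succ m ih =>
      rcases Nat.lt_or_ge k (m+1) with h | h
      · exact (hsubU m).trans (ih (Nat.lt_succ_iff.mp h))
      · rw [Nat.le_antisymm hkm h]
  have hchainV : ∀ k m, k ≤ m → (seq m).1.2 ⊆ (seq k).1.2 := by
    intro k m hkm
    induction m with
    | zero => rw [Nat.le_zero.mp hkm]
    | succ m ih =>
      rcases Nat.lt_or_ge k (m+1) with h | h
      · exact (hsubV m).trans (ih (Nat.lt_succ_iff.mp h))
      · rw [Nat.le_antisymm hkm h]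
  -- ultrafilter limits
  set 𝒰 : Ultrafilter ℕ := hyperfilter ℕ with h𝒰def
  have hUev : ∀ k : ℕ, ∀ᶠ m in (𝒰 : Filter ℕ), k + 1 ≤ m := by
    intro k
    exact (eventually_ge_atTop (k+1)).filter_mono Nat.hyperfilter_le_atTop
  have hpU₁ : ∀ n, ps n ∈ K := fun n => hQK (hU₁Q ((seq n).2.2.2.1 (hpmem n)))
  obtain ⟨ph, -, hph'⟩ := hKc.ultrafilter_le_nhds (𝒰.map ps)
    (le_principal_iff.2 (Ultrafilter.mem_map.2 (by
      filter_upwards [] using fun n => hpU₁ n)))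
  have hph : Tendsto ps (𝒰 : Filter ℕ) (𝓝 ph) := hph'
  obtain ⟨yh, -, hyh'⟩ := isCompact_univ.ultrafilter_le_nhds (𝒰.map ys)
    (le_principal_iff.2 (Ultrafilter.mem_map.2 (by
      filter_upwards [] using fun n => mem_univ (ys n))))
  have hyh : Tendsto ys (𝒰 : Filter ℕ) (𝓝 yh) := hyh'
  obtain ⟨qh, -, hqh'⟩ := isCompact_univ.ultrafilter_le_nhds (𝒰.map qs)
    (le_principal_iff.2 (Ultrafilter.mem_map.2 (by
      filter_upwards [] using fun n => mem_univ (qs n))))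
  have hqh : Tendsto qs (𝒰 : Filter ℕ) (𝓝 qh) := hqh'
  obtain ⟨v, -, hv'⟩ := (isCompact_Icc (a := (0:ℝ)) (b := 1)).ultrafilter_le_nhds
    (𝒰.map fun n => f (xs n) (ys n))
    (le_principal_iff.2 (Ultrafilter.mem_map.2 (by
      filter_upwards [] using fun n => hbd (xs n) (ys n))))
  have hv : Tendsto (fun n => f (xs n) (ys n)) (𝒰 : Filter ℕ) (𝓝 v) := hv'
  obtain ⟨w, -, hw'⟩ := (isCompact_Icc (a := (0:ℝ)) (b := 1)).ultrafilter_le_nhds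
    (𝒰.map fun n => f (ps n) (qs n))
    (le_principal_iff.2 (Ultrafilter.mem_map.2 (by
      filter_upwards [] using fun n => hbd (ps n) (qs n))))
  have hw : Tendsto (fun n => f (ps n) (qs n)) (𝒰 : Filter ℕ) (𝓝 w) := hw'
  obtain ⟨tv, -, htv'⟩ := (isCompact_Icc (a := (0:ℝ)) (b := 1)).ultrafilter_le_nhds
    (𝒰.map fun n => f (ps n) (ts n))
    (le_principal_iff.2 (Ultrafilter.mem_map.2 (by
      filter_upwards [] using fun n => hbd (ps n) (ts n))))
  have htv : Tendsto (fun n => f (ps n) (ts n)) (𝒰 : Filter ℕ) (𝓝 tv) := htv'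
  -- (D1): |f ph yh - v| ≤ ε/20
  have hD1 : |f ph yh - v| ≤ ε/20 := by
    have step1 : ∀ k, |f ph (ys k) - f (xs k) (ys k)| ≤ ε/20 := by
      intro k
      refine le_of_tendsto ((((hfx (ys k)).tendsto ph).comp hph).sub
        tendsto_const_nhds).abs ?_
      filter_upwards [hUev k] with m hm
      exact (hflat1 k (ps m) (hchainU (k+1) m hm (hpmem m))).le
    exact le_of_tendsto ((((hfy ph).tendsto yh).comp hyh).sub hv).abs
      (Eventually.of_forall step1)
  -- (D2): |f ph yh - tv| ≤ ε/20
  have hD2 : |f ph yh - tv| ≤ ε/20 := by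
    have step1 : ∀ k, |f (ps k) yh - f (ps k) (ts k)| ≤ ε/20 := by
      intro k
      refine le_of_tendsto ((((hfy (ps k)).tendsto yh).comp hyh).sub
        tendsto_const_nhds).abs ?_
      filter_upwards [hUev k] with m hm
      exact (hwin k (ys m) (hchainV (k+1) m hm (hymem m))).le
    exact le_of_tendsto ((((hfx yh).tendsto ph).comp hph).sub htv).abs
      (Eventually.of_forall step1)
  -- (D3): |f ph qh - tv| ≤ ε/20
  have hD3 : |f ph qh - tv| ≤ ε/20 := by
    have step1 : ∀ k, |f (ps k) qh - f (ps k) (ts k)| ≤ ε/20 := by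
      intro k
      refine le_of_tendsto ((((hfy (ps k)).tendsto qh).comp hqh).sub
        tendsto_const_nhds).abs ?_
      filter_upwards [hUev k] with m hm
      exact (hwin k (qs m) (hchainV (k+1) m hm (hqmem m))).le
    exact le_of_tendsto ((((hfx qh).tendsto ph).comp hph).sub htv).abs
      (Eventually.of_forall step1)
  -- (D4): |f ph qh - w| ≤ ε/20
  have hD4 : |f ph qh - w| ≤ ε/20 := by
    have step1 : ∀ k, |f ph (qs k) - f (ps k) (qs k)| ≤ ε/20 := by
      intro k
      refine le_of_tendsto ((((hfx (qs k)).tendsto ph).comp hph).sub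
        tendsto_const_nhds).abs ?_
      filter_upwards [hUev k] with m hm
      exact (hflat2 k (ps m) (hchainU (k+1) m hm (hpmem m))).le
    exact le_of_tendsto ((((hfy ph).tendsto qh).comp hqh).sub hw).abs
      (Eventually.of_forall step1)
  -- the gap survives in the limit
  have hgaplim : ε/2 ≤ |w - v| := by
    refine ge_of_tendsto ((hw.sub hv).abs) ?_
    filter_upwards [] with n
    exact (hgap n).le
  -- contradiction
  have h1 : |w - v| ≤ |w - f ph qh| + |f ph qh - f ph yh| + |f ph yh - v| := by
    have := abs_sub_le w (f ph qh) v
    have := abs_sub_le (f ph qh) (f ph yh) v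
    linarith [abs_sub_le w (f ph qh) v, abs_sub_le (f ph qh) (f ph yh) v]
  have h2 : |f ph qh - f ph yh| ≤ |f ph qh - tv| + |tv - f ph yh| := abs_sub_le _ _ _
  have h3 : |w - f ph qh| = |f ph qh - w| := abs_sub_comm _ _
  have h4 : |tv - f ph yh| = |f ph yh - tv| := abs_sub_comm _ _
  linarith [hD1, hD2, hD3, hD4, hgaplim, h1, h2]

end Namioka

/-- (Ellis) Every locally compact Hausdorff semitopological group (a group with a
topology in which multiplication is separately continuous) is a topological
group. -/
theorem topologicalGroup_of_locallyCompact_semitopological {G : Type*} [Group G]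
    [TopologicalSpace G] [LocallyCompactSpace G] [T2Space G]
    (hright : ∀ h : G, Continuous fun g : G => g * h)
    (hleft : ∀ h : G, Continuous fun g : G => h * g) :
    IsTopologicalGroup G := by
  classical
  -- The main lemma: joint continuity at the identity, plus an "inverse trap".
  have main : ∀ W : Set G, IsOpen W → (1:G) ∈ W →
      (∃ V : Set G, IsOpen V ∧ (1:G) ∈ V ∧ ∀ u ∈ V, ∀ v ∈ V, u * v ∈ W) ∧
      (∃ (V L : Set G), IsOpen V ∧ (1:G) ∈ V ∧ IsCompact L ∧ ∀ u ∈ V, u⁻¹ ∈ L) := by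
    intro W hWo h1W
    obtain ⟨K₁, hK₁c, h1K₁, hK₁W⟩ := exists_compact_subset hWo h1W
    set W₁ : Set G := interior K₁ with hW₁def
    have hW₁o : IsOpen W₁ := isOpen_interior
    have hclW₁ : closure W₁ ⊆ K₁ := closure_minimal interior_subset hK₁c.isClosed
    have hclW₁c : IsCompact (closure W₁) := hK₁c.of_isClosed_subset isClosed_closure hclW₁
    obtain ⟨K₂, hK₂c, h1K₂, hK₂W₁⟩ := exists_compact_subset hW₁o h1K₁
    set W₂ : Set G := interior K₂ with hW₂def
    have hW₂o : IsOpen W₂ := isOpen_interior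
    have hclW₂ : closure W₂ ⊆ K₂ := closure_minimal interior_subset hK₂c.isClosed
    have hclW₂c : IsCompact (closure W₂) := hK₂c.of_isClosed_subset isClosed_closure hclW₂
    -- Urysohn function: 1 on closure W₂, 0 off W₁
    obtain ⟨h, hh0, hh1, hhIcc⟩ :=
      exists_continuous_zero_one_of_isCompact' hclW₂c (hW₁o.isClosed_compl)
        (disjoint_compl_right.mono_left (hclW₂.trans hK₂W₁))
    -- the separately continuous function on G × (OnePoint G)
    set F : G → OnePoint G → ℝ := fun x y => y.elim 0 fun g => h (x * g) with hFdef
    have hFcoe : ∀ (x g : G), F x ↑g = h (x * g) := fun _ _ => rfl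
    have hFinf : ∀ x : G, F x ∞ = 0 := fun _ => rfl
    have hFx : ∀ y : OnePoint G, Continuous fun x => F x y := by
      intro y
      induction y using OnePoint.rec with
      | infty => exact continuous_const
      | coe g => exact h.continuous.comp (hright g)
    have hFy : ∀ x : G, Continuous (F x) := by
      intro x
      rw [continuous_iff_continuousAt]
      intro y
      induction y using OnePoint.rec with
      | coe g =>
        rw [OnePoint.continuousAt_coe]
        exact ((h.continuous.comp (hleft x)).continuousAt :)
      | infty =>
        rw [OnePoint.continuousAt_infty]
        intro s hs
        refine ⟨(fun g => x⁻¹ * g) '' closure W₁,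
          ((hclW₁c.image (hleft x⁻¹)).isClosed), hclW₁c.image (hleft x⁻¹), ?_⟩
        intro g hg
        have hxg : x * g ∉ W₁ := by
          intro hmem
          exact hg ⟨x * g, subset_closure hmem, by simp [mul_assoc]⟩
        have : F x ↑g = 0 := by
          rw [hFcoe]
          exact hh0 hxg
        simpa [Function.comp, this] using mem_of_mem_nhds (by rwa [hFinf x] at hs)
    have hbd : ∀ (x : G) (y : OnePoint G), F x y ∈ Icc (0:ℝ) 1 := by
      intro x y
      induction y using OnePoint.rec with
      | infty => exact ⟨le_refl _, zero_le_one⟩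
      | coe g => exact hhIcc (x * g)
    -- apply the Namioka-type lemma on U₀ := W₂
    obtain ⟨a, haW₂, hfib⟩ := namioka_single F hFx hFy hbd hW₂o ⟨1, h1K₂⟩
      (ε := 1/3) (by norm_num)
    -- value computations
    have h1clW₂ : (1:G) ∈ closure W₂ := subset_closure h1K₂
    have hFa1 : F a ↑(a⁻¹) = 1 := by
      rw [hFcoe, mul_inv_cancel]
      simpa using hh1 h1clW₂
    constructor
    · -- joint continuity part: deploy the fiber at a⁻¹
      obtain ⟨A, Vs, hAo, hVso, haA, haiVs, hsmall⟩ := hfib ↑(a⁻¹)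
      set Vg : Set G := (fun g : G => (g : OnePoint G)) ⁻¹' Vs with hVgdef
      have hVgo : IsOpen Vg := hVso.preimage OnePoint.continuous_coe
      have haiVg : a⁻¹ ∈ Vg := haiVs
      have key1 : ∀ x ∈ A, ∀ g ∈ Vg, x * g ∈ W₁ := by
        intro x hx g hg
        have hval := hsmall x hx ↑g hg a haA ↑(a⁻¹) haiVs
        rw [hFcoe, hFa1] at hval
        by_contra hnot
        have hv0 : h (x * g) = 0 := by simpa using hh0 hnot
        rw [hv0, zero_sub, abs_neg, abs_one] at hval
        linarith
      refine ⟨{z | z * a ∈ A} ∩ {z | a⁻¹ * z ∈ Vg},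
        ((hAo.preimage (hright a)).inter (hVgo.preimage (hleft a⁻¹))), ⟨?_, ?_⟩, ?_⟩
      · show (1:G) * a ∈ A
        rwa [one_mul]
      · show a⁻¹ * 1 ∈ Vg
        rwa [mul_one]
      · rintro u ⟨huA, -⟩ v ⟨-, hvV⟩
        have hk := key1 (u * a) huA (a⁻¹ * v) hvV
        have heq : u * a * (a⁻¹ * v) = u * v := by group
        rw [heq] at hk
        exact hK₁W (interior_subset hk)
    · -- inverse trap: deploy the fiber at ∞
      obtain ⟨A, Vs, hAo, hVso, haA, hinfVs, hsmall⟩ := hfib ∞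
      have hVsInf : ∞ ∈ Vs := hinfVs
      obtain ⟨hLc, -⟩ := (OnePoint.isOpen_iff_of_mem' hVsInf).mp hVso
      set L : Set G := ((fun g : G => (g : OnePoint G)) ⁻¹' Vs)ᶜ with hLdef
      have key2 : ∀ x ∈ A, x⁻¹ ∈ L := by
        intro x hx
        by_contra hnot
        have hxi : (↑(x⁻¹) : OnePoint G) ∈ Vs := not_not.mp (by simpa [hLdef] using hnot)
        have hval := hsmall x hx ↑(x⁻¹) hxi a haA ∞ hinfVs
        rw [hFcoe, hFinf, mul_inv_cancel] at hval
        have hv1 : h (1:G) = 1 := by simpa using hh1 h1clW₂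
        rw [hv1, sub_zero, abs_one] at hval
        linarith
      refine ⟨{z | z * a ∈ A}, (fun g : G => a * g) '' L,
        hAo.preimage (hright a), by show (1:G) * a ∈ A; rwa [one_mul], hLc.image (hleft a), ?_⟩
      intro u hu
      refine ⟨(u * a)⁻¹, key2 (u * a) hu, ?_⟩
      group
  -- Continuous multiplication
  have hCM : ContinuousMul G := by
    constructor
    rw [continuous_iff_continuousAt]
    rintro ⟨a, b⟩
    rw [ContinuousAt, nhds_prod_eq]
    intro N hN
    obtain ⟨N', hN'sub, hN'o, habN'⟩ := mem_nhds_iff.mp hN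
    have hWo : IsOpen ((fun z : G => a * z * b) ⁻¹' N') :=
      hN'o.preimage ((hright b).comp (hleft a))
    have h1W : (1:G) ∈ (fun z : G => a * z * b) ⁻¹' N' := by
      simp only [mem_preimage, mul_one]
      exact habN'
    obtain ⟨V, hVo, h1V, hVmul⟩ := (main _ hWo h1W).1
    rw [mem_map]
    have hmem : {x : G | a⁻¹ * x ∈ V} ×ˢ {y : G | y * b⁻¹ ∈ V} ∈ 𝓝 a ×ˢ 𝓝 b := by
      refine prod_mem_prod ?_ ?_
      · exact (hVo.preimage (hleft a⁻¹)).mem_nhds (by simpa using h1V)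
      · exact (hVo.preimage (hright b⁻¹)).mem_nhds (by simpa using h1V)
    refine mem_of_superset hmem ?_
    rintro ⟨x, y⟩ ⟨hx, hy⟩
    have := hVmul _ hx _ hy
    simp only [mem_preimage] at this
    have heq : a * (a⁻¹ * x * (y * b⁻¹)) * b = x * y := by group
    rw [heq] at this
    exact hN'sub this
  haveI := hCM
  -- Continuous inversion
  have hinv1 : Tendsto (fun x : G => x⁻¹) (𝓝 (1:G)) (𝓝 (1:G)) := by
    obtain ⟨V, L, hVo, h1V, hLc, htrap⟩ := (main univ isOpen_univ (mem_univ _)).2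
    rw [tendsto_iff_ultrafilter]
    intro 𝒰 h𝒰
    have hmem : L ∈ 𝒰.map (fun x : G => x⁻¹) := by
      rw [Ultrafilter.mem_map]
      exact mem_of_superset (h𝒰 (hVo.mem_nhds h1V)) fun x hx => htrap x hx
    obtain ⟨q, -, hq⟩ := hLc.ultrafilter_le_nhds (𝒰.map _) (le_principal_iff.2 hmem)
    have hqT : Tendsto (fun x : G => x⁻¹) (↑𝒰 : Filter G) (𝓝 q) := hq
    have hid : Tendsto (fun x : G => x) (↑𝒰 : Filter G) (𝓝 (1:G)) :=
      tendsto_id.mono_right h𝒰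
    have htp : Tendsto (fun x : G => (x, x⁻¹)) (↑𝒰 : Filter G) (𝓝 (1, q)) := by
      rw [nhds_prod_eq]
      exact hid.prodMk hqT
    have hm : Tendsto (fun x : G => x * x⁻¹) ↑𝒰 (𝓝 (1 * q)) :=
      ((continuous_mul.tendsto ((1:G), q)).comp htp :)
    have hconst : Tendsto (fun _ : G => (1:G)) ↑𝒰 (𝓝 (1 * q)) := by
      simpa using hm
    have hq1 : (1:G) * q = 1 := (tendsto_nhds_unique hconst tendsto_const_nhds)
    rw [one_mul] at hq1
    rw [← hq1]
    exact hq
  have hCI : ContinuousInv G := by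
    constructor
    rw [continuous_iff_continuousAt]
    intro a
    have h1 : Tendsto (fun x : G => x * a⁻¹) (𝓝 a) (𝓝 (1:G)) := by
      have h1' : Tendsto (fun x : G => x * a⁻¹) (𝓝 a) (𝓝 (a * a⁻¹)) :=
        (hright a⁻¹).continuousAt
      rwa [mul_inv_cancel] at h1'
    have h2 : Tendsto (fun x : G => x⁻¹) (𝓝 (1:G)) (𝓝 (1:G)) := hinv1
    have h3 : Tendsto (fun z : G => a⁻¹ * z) (𝓝 (1:G)) (𝓝 (a⁻¹ * 1)) :=
      (hleft a⁻¹).continuousAt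
    have hcomp := h3.comp (h2.comp h1)
    unfold ContinuousAt
    simp only [Function.comp_def, mul_inv_rev, inv_inv, inv_mul_cancel_left,
      mul_one] at hcomp
    exact hcomp
  haveI := hCI
  constructor
end
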